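/- arXiv:2111.06113 — 7 statements merged into one kernel-verified Lean document; each statement's English description precedes it below -/
import Mathlib

section
/- Let K be a field, and let f₁, g₁ ∈ K[x], f₂, g₂ ∈ K[y] with f₁, g₁ coprime and f₂, g₂ coprime, all with max(deg fᵢ, deg gᵢ) ≥ 1. If x and y are elements of a field extension L of K satisfying f₁(x)g₂(y) = g₁(x)f₂(y) with g₁(x) ≠ 0, g₂(y) ≠ 0, and the degree of x over K(y) equals max(deg f₁, deg g₁), then the polynomial F(X) = f₁(X)g₂(y) − g₁(X)f₂(y) ∈ K(y)[X] is (up to a scalar in K(y)) the minimal polynomial of x over K(y), and hence is irreducible in K(y)[X]. -/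
set_option maxHeartbeats 1000000 in

/-- Let `K` be a field, `f₁, g₁, f₂, g₂ ∈ K[X]` with `f₁,g₁` coprime, `f₂,g₂` coprime, each pair
not both constant. If `x, y ∈ L ⊇ K` satisfy `f₁(x)g₂(y) = g₁(x)f₂(y)` with `g₁(x) ≠ 0`,
`g₂(y) ≠ 0`, and the degree of `x` over `K(y)` equals `max (deg f₁) (deg g₁)`, then
`F(X) = f₁(X)g₂(y) − g₁(X)f₂(y) ∈ K(y)[X]` is, up to a nonzero scalar of `K(y)`, the minimal
polynomial of `x` over `K(y)`, and hence irreducible in `K(y)[X]`. -/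
theorem stmt_2 (K L : Type*) [Field K] [Field L] [Algebra K L]
    (f₁ g₁ f₂ g₂ : Polynomial K)
    (hcop₁ : IsCoprime f₁ g₁) (hcop₂ : IsCoprime f₂ g₂)
    (hd₁ : 1 ≤ max f₁.natDegree g₁.natDegree) (hd₂ : 1 ≤ max f₂.natDegree g₂.natDegree)
    (x y : L)
    (Ky : IntermediateField K L) (hKy : Ky = IntermediateField.adjoin K {y})
    (yK : ↥Ky) (hyK : (yK : L) = y)
    (hg₁x : Polynomial.aeval x g₁ ≠ 0) (hg₂y : Polynomial.aeval y g₂ ≠ 0)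
    (heq : Polynomial.aeval x f₁ * Polynomial.aeval y g₂ =
      Polynomial.aeval x g₁ * Polynomial.aeval y f₂)
    (hdegx : Module.finrank ↥Ky ↥(IntermediateField.adjoin (↥Ky) {x}) =
      max f₁.natDegree g₁.natDegree)
    (F : Polynomial ↥Ky)
    (hF : F = f₁.map (algebraMap K ↥Ky) * Polynomial.C (Polynomial.aeval yK g₂) -
      g₁.map (algebraMap K ↥Ky) * Polynomial.C (Polynomial.aeval yK f₂)) :
    (∃ c : ↥Ky, c ≠ 0 ∧ F = Polynomial.C c * minpoly ↥Ky x) ∧ Irreducible F := by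
  set n := max f₁.natDegree g₁.natDegree with hn
  set c₂ : ↥Ky := Polynomial.aeval yK g₂ with hc₂
  set c₁ : ↥Ky := Polynomial.aeval yK f₂ with hc₁
  have hc₂L : (algebraMap ↥Ky L) c₂ = Polynomial.aeval y g₂ := by
    rw [hc₂, ← Polynomial.aeval_algebraMap_apply, IntermediateField.algebraMap_apply, hyK]
  have hc₁L : (algebraMap ↥Ky L) c₁ = Polynomial.aeval y f₂ := by
    rw [hc₁, ← Polynomial.aeval_algebraMap_apply, IntermediateField.algebraMap_apply, hyK]
  have hc₂ne : c₂ ≠ 0 := by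
    intro h
    apply hg₂y
    rw [← hc₂L, h, map_zero]
  -- x is a root of F
  have hFx : Polynomial.aeval x F = 0 := by
    rw [hF, map_sub, map_mul, map_mul, Polynomial.aeval_map_algebraMap,
      Polynomial.aeval_map_algebraMap, Polynomial.aeval_C, Polynomial.aeval_C,
      hc₂L, hc₁L, heq, sub_self]
  -- F ≠ 0
  have hcopm : IsCoprime (f₁.map (algebraMap K ↥Ky)) (g₁.map (algebraMap K ↥Ky)) :=
    hcop₁.map (Polynomial.mapRingHom (algebraMap K ↥Ky))
  have hFne : F ≠ 0 := by
    intro h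
    have heqp : f₁.map (algebraMap K ↥Ky) * Polynomial.C c₂ =
        g₁.map (algebraMap K ↥Ky) * Polynomial.C c₁ := by
      have h2 : f₁.map (algebraMap K ↥Ky) * Polynomial.C c₂ -
          g₁.map (algebraMap K ↥Ky) * Polynomial.C c₁ = 0 := hF.symm.trans h
      exact sub_eq_zero.mp h2
    have hg₁deg : g₁.natDegree = 0 := by
      have hdvd : g₁.map (algebraMap K ↥Ky) ∣ Polynomial.C c₂ := by
        refine hcopm.symm.dvd_of_dvd_mul_left ?_
        exact ⟨Polynomial.C c₁, heqp⟩
      have := Polynomial.natDegree_le_of_dvd hdvd (by simpa using hc₂ne)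
      simpa [Polynomial.natDegree_map] using this
    have hf₁deg : f₁.natDegree = 0 := by
      by_cases hc₁0 : c₁ = 0
      · have : f₁.map (algebraMap K ↥Ky) * Polynomial.C c₂ = 0 := by
          rw [heqp, hc₁0, map_zero, mul_zero]
        have hf0 : f₁.map (algebraMap K ↥Ky) = 0 :=
          (mul_eq_zero.mp this).resolve_right (by simpa using hc₂ne)
        have : f₁ = 0 := by
          rwa [Polynomial.map_eq_zero] at hf0
        simp [this]
      · have hdvd : f₁.map (algebraMap K ↥Ky) ∣ Polynomial.C c₁ := by
          refine hcopm.dvd_of_dvd_mul_left ?_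
          exact ⟨Polynomial.C c₂, heqp.symm⟩
        have := Polynomial.natDegree_le_of_dvd hdvd (by simpa using hc₁0)
        simpa [Polynomial.natDegree_map] using this
    omega
  -- degree bound on F
  have hdegF : F.natDegree ≤ n := by
    rw [hF]
    refine (Polynomial.natDegree_sub_le _ _).trans ?_
    have h1 : (f₁.map (algebraMap K ↥Ky) * Polynomial.C c₂).natDegree ≤ f₁.natDegree := by
      refine (Polynomial.natDegree_mul_le).trans ?_
      simp [Polynomial.natDegree_map]
    have h2 : (g₁.map (algebraMap K ↥Ky) * Polynomial.C c₁).natDegree ≤ g₁.natDegree := by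
      refine (Polynomial.natDegree_mul_le).trans ?_
      simp [Polynomial.natDegree_map]
    omega
  -- x is integral over Ky
  haveI : FiniteDimensional ↥Ky ↥(IntermediateField.adjoin (↥Ky) {x}) :=
    FiniteDimensional.of_finrank_pos (by rw [hdegx]; omega)
  have hxint : IsIntegral ↥Ky x := by
    have : IsIntegral ↥Ky
        (⟨x, IntermediateField.mem_adjoin_simple_self (↥Ky) x⟩ :
          ↥(IntermediateField.adjoin (↥Ky) {x})) :=
      IsIntegral.of_finite _ _
    exact IntermediateField.isIntegral_iff.mp this
  have hmindeg : (minpoly ↥Ky x).natDegree = n := by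
    rw [← IntermediateField.adjoin.finrank hxint, hdegx]
  have hdvd : minpoly ↥Ky x ∣ F := minpoly.dvd _ _ hFx
  have hkey : F = Polynomial.C F.leadingCoeff * minpoly ↥Ky x :=
    Polynomial.eq_leadingCoeff_mul_of_monic_of_dvd_of_natDegree_le
      (minpoly.monic hxint) hdvd (by omega)
  have hcne : F.leadingCoeff ≠ 0 := Polynomial.leadingCoeff_ne_zero.mpr hFne
  refine ⟨⟨F.leadingCoeff, hcne, hkey⟩, ?_⟩
  have hassoc : Associated (minpoly ↥Ky x) F :=
    ⟨(Polynomial.isUnit_C.mpr (isUnit_iff_ne_zero.mpr hcne)).unit, by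
      conv_rhs => rw [hkey]
      rw [IsUnit.unit_spec]; exact mul_comm _ _⟩
  exact hassoc.irreducible (minpoly.irreducible hxint)
end

section
/- Let h(x) = f(x)/g(x) ∈ F_q(x) with f, g ∈ F_q[x] coprime and n = max(deg f, deg g) ≥ 1. Suppose the extension F_q(x)/F_q(h) is Galois of degree n, with all automorphisms defined over F_q. Then the value set V_h = { h(α) : α ∈ P¹(F_q) } ⊆ P¹(F_q) satisfies ⌈(q+1)/n⌉ ≤ #V_h ≤ ⌈(q+1)/n⌉ + 1. -/
open Polynomial OnePoint
open scoped Classical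

noncomputable section BBQAux

variable {Fq : Type*} [Field Fq]

/-- Möbius transformation on the projective line `OnePoint Fq`. -/
noncomputable def mob (a b c d : Fq) : OnePoint Fq → OnePoint Fq := fun α =>
  OnePoint.rec (if c = 0 then ∞ else (((a / c : Fq)) : OnePoint Fq))
    (fun x => if c * x + d = 0 then ∞ else (((a * x + b) / (c * x + d) : Fq) : OnePoint Fq)) α

@[simp] lemma mob_infty (a b c d : Fq) :
    mob a b c d ∞ = if c = 0 then ∞ else (((a / c : Fq)) : OnePoint Fq) := rfl

@[simp] lemma mob_coe (a b c d x : Fq) :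
    mob a b c d (x : OnePoint Fq)
      = if c * x + d = 0 then ∞ else (((a * x + b) / (c * x + d) : Fq) : OnePoint Fq) := rfl

/-- `u` is the Möbius rational function with matrix `(a b; c d)`. -/
def IsMob (u : RatFunc Fq) (a b c d : Fq) : Prop :=
  a * d - b * c ≠ 0 ∧
    u * algebraMap (Polynomial Fq) (RatFunc Fq) (C c * X + C d)
      = algebraMap (Polynomial Fq) (RatFunc Fq) (C a * X + C b)

lemma linear_ne_zero'' {c d : Fq} (h : ¬(c = 0 ∧ d = 0)) : (C c * X + C d : Fq[X]) ≠ 0 := by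
  intro h0
  apply h
  constructor
  · have := congrArg (fun P => coeff P 1) h0
    simpa using this
  · have := congrArg (fun P => coeff P 0) h0
    simpa using this

lemma IsMob.cd {u : RatFunc Fq} {a b c d : Fq} (h : IsMob u a b c d) : ¬(c = 0 ∧ d = 0) := by
  rintro ⟨rfl, rfl⟩
  exact h.1 (by ring)

lemma expand_linear_mul (p q r s : Fq) :
    (C p * X + C q) * (C r * X + C s) = C (p*r) * X^2 + C (p*s + q*r) * X + C (q*s) := by
  simp only [C_mul, C_add]; ring

lemma mob_welldef {u : RatFunc Fq} {a b c d a' b' c' d' : Fq}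
    (h : IsMob u a b c d) (h' : IsMob u a' b' c' d') :
    mob a b c d = mob a' b' c' d' := by
  obtain ⟨hdet, heq⟩ := h
  obtain ⟨hdet', heq'⟩ := h'
  have inj : Function.Injective (algebraMap Fq[X] (RatFunc Fq)) :=
    IsFractionRing.injective _ _
  have hpoly : (C a * X + C b) * (C c' * X + C d') = (C a' * X + C b') * (C c * X + C d) := by
    apply inj
    rw [map_mul, map_mul, ← heq, ← heq']
    ring
  rw [expand_linear_mul, expand_linear_mul] at hpoly
  have e2 : a * c' = a' * c := by
    have h2 := congrArg (fun P => coeff P 2) hpoly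
    simp only [coeff_add, coeff_C_mul, coeff_X_pow, coeff_X, coeff_C] at h2
    simpa using h2
  have hev : ∀ x : Fq, (a*x+b)*(c'*x+d') = (a'*x+b')*(c*x+d) := by
    intro x
    have h1 := congrArg (fun P => eval x P) hpoly
    simp only [eval_add, eval_sub, eval_mul, eval_pow, eval_C, eval_X] at h1
    linear_combination h1
  have hnb : ∀ x : Fq, ¬(a*x+b = 0 ∧ c*x+d = 0) := by
    rintro x ⟨u1, u2⟩
    exact hdet (by linear_combination a*u2 - c*u1)
  have hnb' : ∀ x : Fq, ¬(a'*x+b' = 0 ∧ c'*x+d' = 0) := by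
    rintro x ⟨u1, u2⟩
    exact hdet' (by linear_combination a'*u2 - c'*u1)
  funext α
  cases α with
  | infty =>
    simp only [mob_infty]
    by_cases hc : c = 0 <;> by_cases hc' : c' = 0
    · simp [hc, hc']
    · exfalso
      have ha : a ≠ 0 := fun h0 => hdet (by rw [h0, hc]; ring)
      apply hc'
      have : a * c' = 0 := by rw [e2, hc]; ring
      exact (mul_eq_zero.mp this).resolve_left ha
    · exfalso
      have ha' : a' ≠ 0 := fun h0 => hdet' (by rw [h0, hc']; ring)
      apply hc
      have : a' * c = 0 := by rw [← e2, hc']; ring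
      exact (mul_eq_zero.mp this).resolve_left ha'
    · simp only [if_neg hc, if_neg hc']
      congr 1
      rw [div_eq_div_iff hc hc']
      exact e2
  | coe x =>
    simp only [mob_coe]
    by_cases H1 : c*x+d = 0 <;> by_cases H2 : c'*x+d' = 0
    · simp [H1, H2]
    · exfalso
      have hab : a*x+b ≠ 0 := fun h0 => hnb x ⟨h0, H1⟩
      apply H2
      have h0 : (a*x+b)*(c'*x+d') = 0 := by rw [hev x, H1]; ring
      exact (mul_eq_zero.mp h0).resolve_left hab
    · exfalso
      have hab' : a'*x+b' ≠ 0 := fun h0 => hnb' x ⟨h0, H2⟩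
      apply H1
      have h0 : (a'*x+b')*(c*x+d) = 0 := by rw [← hev x, H2]; ring
      exact (mul_eq_zero.mp h0).resolve_left hab'
    · simp only [if_neg H1, if_neg H2]
      congr 1
      rw [div_eq_div_iff H1 H2]
      exact hev x

lemma mob_mul {a b c d p q r s : Fq} (hM : a*d - b*c ≠ 0) (hN : p*s - q*r ≠ 0)
    (α : OnePoint Fq) :
    mob (a*p + b*r) (a*q + b*s) (c*p + d*r) (c*q + d*s) α = mob a b c d (mob p q r s α) := by
  cases α with
  | infty =>
    rw [mob_infty, mob_infty]
    by_cases hr : r = 0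
    · subst hr
      have hp : p ≠ 0 := fun h0 => hN (by rw [h0]; ring)
      rw [if_pos rfl, mob_infty]
      by_cases hc : c = 0
      · rw [if_pos (by rw [hc]; ring), if_pos hc]
      · have h2 : c*p + d*0 ≠ 0 := by simpa [hp] using hc
        rw [if_neg h2, if_neg hc]
        congr 1
        rw [div_eq_div_iff h2 hc]
        ring
    · rw [if_neg hr, mob_coe]
      have key : c * (p/r) + d = (c*p + d*r)/r := by field_simp
      by_cases hcd : c*p + d*r = 0
      · rw [if_pos hcd, if_pos (by rw [key, hcd, zero_div])]
      · have h2 : c * (p/r) + d ≠ 0 := by rw [key]; exact div_ne_zero hcd hr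
        rw [if_neg hcd, if_neg h2]
        congr 1
        rw [div_eq_div_iff hcd h2, key]
        field_simp
  | coe x =>
    rw [mob_coe, mob_coe]
    have hL1 : (c*p + d*r)*x + (c*q + d*s) = c*(p*x+q) + d*(r*x+s) := by ring
    have hL2 : (a*p + b*r)*x + (a*q + b*s) = a*(p*x+q) + b*(r*x+s) := by ring
    rw [hL1, hL2]
    by_cases hD : r*x+s = 0
    · have hNu : p*x+q ≠ 0 := by
        intro h0
        exact hN (by linear_combination p*hD - r*h0)
      rw [if_pos hD, mob_infty, hD]
      by_cases hc : c = 0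
      · rw [if_pos (by rw [hc]; ring), if_pos hc]
      · have hne : c*(p*x+q) + d*0 ≠ 0 := by simpa [hNu] using hc
        rw [if_neg hne, if_neg hc]
        congr 1
        rw [div_eq_div_iff hne hc]
        ring
    · rw [if_neg hD, mob_coe]
      have key : c * ((p*x+q)/(r*x+s)) + d = (c*(p*x+q) + d*(r*x+s))/(r*x+s) := by
        rw [mul_div_assoc', div_add' _ _ _ hD]
      by_cases hcd : c*(p*x+q) + d*(r*x+s) = 0
      · rw [if_pos hcd, if_pos (by rw [key, hcd, zero_div])]
      · have h2 : c * ((p*x+q)/(r*x+s)) + d ≠ 0 := by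
          rw [key]; exact div_ne_zero hcd hD
        rw [if_neg hcd, if_neg h2]
        congr 1
        rw [div_eq_div_iff hcd h2, key]
        have hD' : x * r + s ≠ 0 := by rwa [mul_comm x r]
        field_simp

lemma mob_id (α : OnePoint Fq) : mob (1:Fq) 0 0 1 α = α := by
  cases α with
  | infty => simp [mob_infty]
  | coe x => simp [mob_coe]

lemma mob_fixed_le {a b c d : Fq} (hdet : a*d - b*c ≠ 0)
    (hQ : ¬(c = 0 ∧ b = 0 ∧ a = d)) :
    ({α : OnePoint Fq | mob a b c d α = α}).ncard ≤ 2 := by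
  by_cases hc : c = 0
  · have hd : d ≠ 0 := fun h0 => hdet (by rw [hc, h0]; ring)
    by_cases had : a = d
    · have hb : b ≠ 0 := fun h0 => hQ ⟨hc, h0, had⟩
      have hsub : {α : OnePoint Fq | mob a b c d α = α} ⊆ {∞} := by
        intro α hα
        cases α with
        | infty => simp
        | coe x =>
          exfalso
          simp only [Set.mem_setOf_eq, mob_coe, hc, zero_mul, zero_add, if_neg hd] at hα
          rw [OnePoint.coe_eq_coe, div_eq_iff hd, had] at hα
          apply hb
          linear_combination hα
      calc ({α : OnePoint Fq | mob a b c d α = α}).ncard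
          ≤ ({∞} : Set (OnePoint Fq)).ncard := Set.ncard_le_ncard hsub (Set.finite_singleton _)
        _ = 1 := Set.ncard_singleton _
        _ ≤ 2 := by norm_num
    · have hsub : {α : OnePoint Fq | mob a b c d α = α}
          ⊆ insert ∞ {((b/(d-a) : Fq) : OnePoint Fq)} := by
        intro α hα
        cases α with
        | infty => exact Set.mem_insert _ _
        | coe x =>
          simp only [Set.mem_setOf_eq, mob_coe, hc, zero_mul, zero_add, if_neg hd] at hα
          rw [OnePoint.coe_eq_coe, div_eq_iff hd] at hα
          apply Set.mem_insert_of_mem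
          simp only [Set.mem_singleton_iff, OnePoint.coe_eq_coe]
          have hda : d - a ≠ 0 := fun h0 => had (by linear_combination -h0)
          rw [eq_comm, div_eq_iff hda]
          linear_combination hα
      calc ({α : OnePoint Fq | mob a b c d α = α}).ncard
          ≤ (insert ∞ {((b/(d-a) : Fq) : OnePoint Fq)} : Set (OnePoint Fq)).ncard :=
            Set.ncard_le_ncard hsub ((Set.finite_singleton _).insert _)
        _ ≤ ({((b/(d-a) : Fq) : OnePoint Fq)} : Set (OnePoint Fq)).ncard + 1 :=
            Set.ncard_insert_le _ _
        _ ≤ 2 := by rw [Set.ncard_singleton]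
  · set Q : Fq[X] := C c * X^2 + C (d-a) * X + C (-b) with hQdef
    have hQdeg : Q.natDegree = 2 := natDegree_quadratic hc
    have hQ0 : Q ≠ 0 := fun h0 => by simp [h0] at hQdeg
    have hsub : {α : OnePoint Fq | mob a b c d α = α}
        ⊆ (fun x : Fq => (x : OnePoint Fq)) '' (Q.roots.toFinset : Set Fq) := by
      intro α hα
      cases α with
      | infty =>
        exfalso
        simp only [Set.mem_setOf_eq, mob_infty, if_neg hc] at hα
        exact OnePoint.coe_ne_infty _ hα
      | coe x =>
        simp only [Set.mem_setOf_eq, mob_coe] at hα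
        by_cases hcx : c*x+d = 0
        · rw [if_pos hcx] at hα
          exact absurd hα.symm (OnePoint.coe_ne_infty _)
        · rw [if_neg hcx, OnePoint.coe_eq_coe, div_eq_iff hcx] at hα
          refine ⟨x, ?_, rfl⟩
          simp only [Finset.coe_mem, Finset.mem_coe, Multiset.mem_toFinset]
          rw [mem_roots hQ0]
          simp only [IsRoot.def, hQdef, eval_add, eval_mul, eval_pow, eval_C, eval_X]
          linear_combination -hα
    calc ({α : OnePoint Fq | mob a b c d α = α}).ncard
        ≤ ((fun x : Fq => (x : OnePoint Fq)) '' (Q.roots.toFinset : Set Fq)).ncard :=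
          Set.ncard_le_ncard hsub (((Q.roots.toFinset : Set Fq).toFinite).image _)
      _ ≤ (Q.roots.toFinset : Set Fq).ncard := Set.ncard_image_le ((Q.roots.toFinset : Set Fq).toFinite)
      _ = Q.roots.toFinset.card := Set.ncard_coe_finset _
      _ ≤ Multiset.card Q.roots := Q.roots.toFinset_card_le
      _ ≤ Q.natDegree := Q.card_roots'
      _ = 2 := hQdeg

lemma algebraMap_eq_aeval' (P : Fq[X]) :
    (algebraMap Fq[X] (RatFunc Fq)) P = aeval RatFunc.X P := by
  have h := Polynomial.aeval_algHom_apply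
    (IsScalarTower.toAlgHom Fq Fq[X] (RatFunc Fq)) Polynomial.X P
  simpa [RatFunc.algebraMap_X] using h.symm

/-- homogeneous substitution -/
noncomputable def hsub (N : ℕ) (p q A : Fq[X]) : Fq[X] :=
  ∑ i ∈ Finset.range (N+1), C (A.coeff i) * p^i * q^(N-i)

lemma hsub_spec {q : Fq[X]} (hq : q ≠ 0) (p A : Fq[X]) {N : ℕ} (hA : A.natDegree ≤ N) :
    algebraMap Fq[X] (RatFunc Fq) (hsub N p q A)
      = aeval (algebraMap Fq[X] (RatFunc Fq) p / algebraMap Fq[X] (RatFunc Fq) q) A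
          * (algebraMap Fq[X] (RatFunc Fq) q)^N := by
  have hQr : algebraMap Fq[X] (RatFunc Fq) q ≠ 0 := RatFunc.algebraMap_ne_zero hq
  rw [Polynomial.aeval_eq_sum_range' (lt_of_le_of_lt hA (Nat.lt_succ_self N)), Finset.sum_mul,
    hsub, map_sum]
  refine Finset.sum_congr rfl ?_
  intro i hi
  rw [Finset.mem_range, Nat.lt_succ_iff] at hi
  have hsplit : (algebraMap Fq[X] (RatFunc Fq) q)^N
      = (algebraMap Fq[X] (RatFunc Fq) q)^i * (algebraMap Fq[X] (RatFunc Fq) q)^(N-i) := by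
    rw [← pow_add, Nat.add_sub_cancel' hi]
  rw [map_mul, map_mul, map_pow, map_pow, RatFunc.algebraMap_C, ← RatFunc.smul_eq_C_mul,
    smul_mul_assoc, smul_mul_assoc]
  congr 1
  rw [hsplit, div_pow]
  rw [div_mul_eq_mul_div, mul_comm ((algebraMap Fq[X] (RatFunc Fq) q)^i), ← mul_assoc,
    mul_div_assoc, div_self (pow_ne_zero i hQr), mul_one]

lemma deg_le_one_of_rel {p q : Fq[X]} (hp : p ≠ 0) (hcop : IsCoprime p q) {N : ℕ}
    {c : ℕ → Fq[X]} (hdeg : ∀ j, (c j).natDegree ≤ 1)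
    (hne : ∃ j, j ≤ N ∧ c j ≠ 0)
    (hsum : ∑ j ∈ Finset.range (N+1), c j * p^j * q^(N-j) = 0) :
    p.natDegree ≤ 1 := by
  obtain ⟨jw, hjw, hjc⟩ := hne
  have hex : ∃ j, c j ≠ 0 := ⟨jw, hjc⟩
  set j₀ := Nat.find hex with hj₀def
  have hc0 : c j₀ ≠ 0 := Nat.find_spec hex
  have hmin : ∀ i, i < j₀ → c i = 0 := by
    intro i hi
    by_contra hne'
    exact absurd (Nat.find_le hne') (not_le.mpr hi)
  have hj₀N : j₀ ≤ N := le_trans (Nat.find_min' hex hjc) hjw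
  have hIco : ∑ j ∈ Finset.Ico j₀ (N+1), c j * p^j * q^(N-j) = 0 := by
    rw [← hsum]
    apply Finset.sum_subset
    · intro x hx
      rw [Finset.mem_Ico] at hx
      exact Finset.mem_range.mpr hx.2
    · intro x hx hnx
      rw [Finset.mem_range] at hx
      rw [Finset.mem_Ico, not_and_or] at hnx
      have hxlt : x < j₀ := by
        rcases hnx with h | h
        · exact not_le.mp h
        · exact absurd hx (by simpa using h)
      rw [hmin x hxlt]
      ring
  rw [Finset.sum_Ico_eq_sum_range] at hIco
  have hNN : N + 1 - j₀ = (N - j₀) + 1 := by omega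
  rw [hNN, Finset.sum_range_succ'] at hIco
  set S := ∑ i ∈ Finset.range (N-j₀), c (j₀+(i+1)) * p^i * q^(N-(j₀+(i+1))) with hSdef
  have hfact : ∀ i ∈ Finset.range (N-j₀),
      c (j₀+(i+1)) * p^(j₀+(i+1)) * q^(N-(j₀+(i+1)))
        = p^j₀ * (p * (c (j₀+(i+1)) * p^i * q^(N-(j₀+(i+1))))) := by
    intro i _
    rw [pow_add, pow_succ]
    ring
  rw [Finset.sum_congr rfl hfact, ← Finset.mul_sum, ← Finset.mul_sum, ← hSdef] at hIco
  have hz : p^j₀ * (p * S + c j₀ * q^(N-j₀)) = 0 := by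
    simp only [Nat.add_zero] at hIco
    linear_combination hIco
  have hz2 : p * S + c j₀ * q^(N-j₀) = 0 :=
    (mul_eq_zero.mp hz).resolve_left (pow_ne_zero j₀ hp)
  have hdvd : p ∣ c j₀ * q^(N-j₀) := ⟨-S, by linear_combination hz2⟩
  have hdvd2 : p ∣ c j₀ := (hcop.pow_right).dvd_of_dvd_mul_right hdvd
  exact le_trans (Polynomial.natDegree_le_of_dvd hdvd2 hc0) (hdeg j₀)

lemma exists_isMob (σ : RatFunc Fq ≃ₐ[Fq] RatFunc Fq) :
    ∃ v : Fq × Fq × Fq × Fq, IsMob (σ RatFunc.X) v.1 v.2.1 v.2.2.1 v.2.2.2 := by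
  set u := σ RatFunc.X with hudef
  have hu0 : u ≠ 0 := by
    intro h0
    apply RatFunc.X_ne_zero (K := Fq)
    have := σ.injective (a₁ := RatFunc.X) (a₂ := 0) (by rw [map_zero, ← hudef, h0])
    exact this
  set p := u.num with hpdef
  set q := u.denom with hqdef
  have hq : q ≠ 0 := u.denom_ne_zero
  have hp : p ≠ 0 := RatFunc.num_ne_zero hu0
  have hcop : IsCoprime p q := u.isCoprime_num_denom
  have hqK : algebraMap Fq[X] (RatFunc Fq) q ≠ 0 := RatFunc.algebraMap_ne_zero hq
  have hu_eq : u = algebraMap Fq[X] (RatFunc Fq) p / algebraMap Fq[X] (RatFunc Fq) q :=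
    (u.num_div_denom).symm
  have hσalg : ∀ P : Fq[X], σ (algebraMap Fq[X] (RatFunc Fq) P) = aeval u P := by
    intro P
    rw [algebraMap_eq_aeval']
    exact (Polynomial.aeval_algHom_apply σ RatFunc.X P).symm
  -- the inverse image of X
  set r := σ.symm RatFunc.X with hrdef
  set A := r.num with hAdef
  set B := r.denom with hBdef
  have hB : B ≠ 0 := r.denom_ne_zero
  have hBK : algebraMap Fq[X] (RatFunc Fq) B ≠ 0 := RatFunc.algebraMap_ne_zero hB
  have hr : r * algebraMap Fq[X] (RatFunc Fq) B = algebraMap Fq[X] (RatFunc Fq) A := by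
    rw [← r.num_div_denom, div_mul_cancel₀ _ hBK]
  have hXB : RatFunc.X * aeval u B = aeval u A := by
    have := congrArg σ hr
    rw [map_mul, hσalg, hσalg, hrdef, σ.apply_symm_apply] at this
    exact this
  set N := max A.natDegree B.natDegree with hNdef
  have hsubA := hsub_spec hq p A (le_max_left A.natDegree B.natDegree)
  have hsubB := hsub_spec hq p B (le_max_right A.natDegree B.natDegree)
  rw [← hu_eq] at hsubA hsubB
  have hXid : Polynomial.X * hsub N p q B = hsub N p q A := by
    apply IsFractionRing.injective Fq[X] (RatFunc Fq)
    rw [map_mul, hsubA, hsubB, ← mul_assoc]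
    rw [show (algebraMap Fq[X] (RatFunc Fq)) Polynomial.X = RatFunc.X from RatFunc.algebraMap_X]
    rw [hXB]
  set cc : ℕ → Fq[X] := fun j => C (A.coeff j) - Polynomial.X * C (B.coeff j) with hccdef
  have hccsum : ∑ j ∈ Finset.range (N+1), cc j * p^j * q^(N-j) = 0 := by
    have : ∑ j ∈ Finset.range (N+1), cc j * p^j * q^(N-j)
        = hsub N p q A - Polynomial.X * hsub N p q B := by
      rw [hsub, hsub, Finset.mul_sum, ← Finset.sum_sub_distrib]
      refine Finset.sum_congr rfl ?_
      intro i _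
      rw [hccdef]
      ring
    rw [this, ← hXid]
    ring
  have hccdeg : ∀ j, (cc j).natDegree ≤ 1 := by
    intro j
    refine le_trans (natDegree_sub_le _ _) (max_le (by simp) ?_)
    refine le_trans (natDegree_mul_le) ?_
    simp
  have hccne : ∃ j, j ≤ N ∧ cc j ≠ 0 := by
    by_contra hall
    push_neg at hall
    apply hB
    ext k
    by_cases hk : k ≤ N
    · have h0 := hall k hk
      have := congrArg (fun P => coeff P 1) h0
      simp only [hccdef, coeff_sub, coeff_C, coeff_X_mul, coeff_zero] at this
      simpa using this
    · push_neg at hk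
      rw [coeff_eq_zero_of_natDegree_lt
        (lt_of_le_of_lt (le_trans (le_max_right A.natDegree B.natDegree) (le_refl N)) hk)]
      simp
  have hp1 : p.natDegree ≤ 1 := deg_le_one_of_rel hp hcop hccdeg hccne hccsum
  have hq1 : q.natDegree ≤ 1 := by
    obtain ⟨jw, hjwN, hjwne⟩ := hccne
    refine deg_le_one_of_rel hq hcop.symm (c := fun j => cc (N - j)) (N := N)
      (fun j => hccdeg (N - j))
      ⟨N - jw, by omega, by simpa [Nat.sub_sub_self hjwN] using hjwne⟩ ?_
    calc ∑ j ∈ Finset.range (N+1), cc (N-j) * q^j * p^(N-j)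
        = ∑ j ∈ Finset.range (N+1), cc (N-j) * p^(N-j) * q^(N-(N-j)) := by
          refine Finset.sum_congr rfl ?_
          intro j hj
          rw [Finset.mem_range, Nat.lt_succ_iff] at hj
          rw [show N-(N-j) = j by omega]
          ring
      _ = ∑ j ∈ Finset.range (N+1), cc j * p^j * q^(N-j) := by
          have hrefl := Finset.sum_range_reflect (fun j => cc j * p^j * q^(N-j)) (N+1)
          simpa using hrefl
      _ = 0 := hccsum
  -- now assemble the Möbius data
  set a := p.coeff 1 with hadef
  set b := p.coeff 0 with hbdef
  set c := q.coeff 1 with hcdef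
  set d := q.coeff 0 with hddef
  have hpeq : p = C a * Polynomial.X + C b := eq_X_add_C_of_natDegree_le_one hp1
  have hqeq : q = C c * Polynomial.X + C d := eq_X_add_C_of_natDegree_le_one hq1
  have hmain : u * algebraMap Fq[X] (RatFunc Fq) (C c * Polynomial.X + C d)
      = algebraMap Fq[X] (RatFunc Fq) (C a * Polynomial.X + C b) := by
    rw [← hpeq, ← hqeq, hu_eq, div_mul_cancel₀ _ hqK]
  have hdet : a * d - b * c ≠ 0 := by
    intro hdet0
    by_cases hc : c = 0
    · have hd : d ≠ 0 := by
        intro hd0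
        apply hq
        rw [hqeq, hc, hd0]
        simp
      have ha : a = 0 := by
        have had : a * d = 0 := by rw [hc] at hdet0; linear_combination hdet0
        exact (mul_eq_zero.mp had).resolve_right hd
      -- u is a constant
      have hu_const : u = algebraMap Fq (RatFunc Fq) (b / d) := by
        rw [hu_eq, hpeq, hqeq, ha, hc]
        simp only [map_zero, zero_mul, zero_add]
        rw [RatFunc.algebraMap_C, RatFunc.algebraMap_C, RatFunc.algebraMap_eq_C, map_div₀]
      have hX_const : (RatFunc.X : RatFunc Fq) = algebraMap Fq (RatFunc Fq) (b / d) := by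
        rw [← σ.symm_apply_apply RatFunc.X, ← hudef, hu_const, AlgEquiv.commutes]
      apply Polynomial.X_ne_C (R := Fq) (b / d)
      apply IsFractionRing.injective Fq[X] (RatFunc Fq)
      rw [RatFunc.algebraMap_X, RatFunc.algebraMap_C, ← RatFunc.algebraMap_eq_C]
      exact hX_const
    · -- q divides p
      have hdvd : q ∣ p := by
        refine ⟨C (a/c), ?_⟩
        have h1 : (C c * Polynomial.X + C d) * C (a/c)
            = C (a/c*c) * Polynomial.X + C (a/c*d) := by
          simp only [C_mul]
          ring
        rw [hpeq, hqeq, h1, div_mul_cancel₀ _ hc]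
        congr 2
        field_simp
        linear_combination -hdet0
      have hunit : IsUnit q := hcop.symm.isUnit_of_dvd' dvd_rfl hdvd
      apply hc
      rw [hcdef]
      exact coeff_eq_zero_of_natDegree_lt (by rw [natDegree_eq_zero_of_isUnit hunit]; omega)
  exact ⟨(a, b, c, d), hdet, hmain⟩

/-- chosen matrix of an automorphism -/
noncomputable def mat (σ : RatFunc Fq ≃ₐ[Fq] RatFunc Fq) : Fq × Fq × Fq × Fq :=
  Classical.choose (exists_isMob σ)

lemma mat_spec (σ : RatFunc Fq ≃ₐ[Fq] RatFunc Fq) :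
    IsMob (σ RatFunc.X) (mat σ).1 (mat σ).2.1 (mat σ).2.2.1 (mat σ).2.2.2 :=
  Classical.choose_spec (exists_isMob σ)

/-- the Möbius transformation of `OnePoint Fq` attached to an automorphism -/
noncomputable def mobOf (σ : RatFunc Fq ≃ₐ[Fq] RatFunc Fq) : OnePoint Fq → OnePoint Fq :=
  mob (mat σ).1 (mat σ).2.1 (mat σ).2.2.1 (mat σ).2.2.2

lemma mobOf_welldef {σ : RatFunc Fq ≃ₐ[Fq] RatFunc Fq} {a b c d : Fq}
    (h : IsMob (σ RatFunc.X) a b c d) : mobOf σ = mob a b c d :=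
  mob_welldef (mat_spec σ) h

lemma isMob_mul {φ ψ : RatFunc Fq ≃ₐ[Fq] RatFunc Fq} {a b c d p q r s : Fq}
    (hφ : IsMob (φ RatFunc.X) a b c d) (hψ : IsMob (ψ RatFunc.X) p q r s) :
    IsMob ((φ * ψ) RatFunc.X) (p*a + q*c) (p*b + q*d) (r*a + s*c) (r*b + s*d) := by
  obtain ⟨hd1, he1⟩ := hφ
  obtain ⟨hd2, he2⟩ := hψ
  constructor
  · intro h0
    have h1 : (p*s - q*r) * (a*d - b*c) = 0 := by linear_combination h0
    rcases mul_eq_zero.mp h1 with h | h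
    · exact hd2 h
    · exact hd1 h
  · have hφalg : ∀ P : Fq[X], φ (algebraMap Fq[X] (RatFunc Fq) P)
        = aeval (φ RatFunc.X) P := by
      intro P
      rw [algebraMap_eq_aeval']
      exact (Polynomial.aeval_algHom_apply φ RatFunc.X P).symm
    have hap := congrArg φ he2
    rw [map_mul, hφalg, hφalg] at hap
    have hev : ∀ e1 e2 : Fq, aeval (φ RatFunc.X) (C e1 * Polynomial.X + C e2)
        = algebraMap Fq (RatFunc Fq) e1 * φ RatFunc.X + algebraMap Fq (RatFunc Fq) e2 := by
      intro e1 e2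
      simp only [map_add, map_mul, aeval_C, aeval_X]
    rw [hev, hev] at hap
    have hsc : ∀ e : Fq, algebraMap Fq (RatFunc Fq) e
        = algebraMap Fq[X] (RatFunc Fq) (C e) := by
      intro e
      rw [RatFunc.algebraMap_C, RatFunc.algebraMap_eq_C]
    have hexp : ∀ e1 e2 : Fq,
        algebraMap Fq[X] (RatFunc Fq) (C (e1*a + e2*c) * Polynomial.X + C (e1*b + e2*d))
          = algebraMap Fq (RatFunc Fq) e1
              * algebraMap Fq[X] (RatFunc Fq) (C a * Polynomial.X + C b)
            + algebraMap Fq (RatFunc Fq) e2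
              * algebraMap Fq[X] (RatFunc Fq) (C c * Polynomial.X + C d) := by
      intro e1 e2
      rw [hsc e1, hsc e2, ← map_mul, ← map_mul, ← map_add]
      congr 1
      simp only [C_mul, C_add]
      ring
    rw [AlgEquiv.mul_apply, hexp p q, hexp r s]
    linear_combination (algebraMap Fq[X] (RatFunc Fq) (C c * Polynomial.X + C d)) * hap
      - (φ (ψ RatFunc.X) * algebraMap Fq (RatFunc Fq) r - algebraMap Fq (RatFunc Fq) p) * he1

lemma mobOf_mul (φ ψ : RatFunc Fq ≃ₐ[Fq] RatFunc Fq) (α : OnePoint Fq) :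
    mobOf (φ * ψ) α = mobOf ψ (mobOf φ α) := by
  obtain ⟨hd1, he1⟩ := mat_spec φ
  obtain ⟨hd2, he2⟩ := mat_spec ψ
  have h := isMob_mul (mat_spec φ) (mat_spec ψ)
  rw [mobOf_welldef h]
  have := mob_mul (a := (mat ψ).1) (b := (mat ψ).2.1) (c := (mat ψ).2.2.1) (d := (mat ψ).2.2.2)
    (p := (mat φ).1) (q := (mat φ).2.1) (r := (mat φ).2.2.1) (s := (mat φ).2.2.2)
    hd2 hd1 α
  rw [this]
  rfl

lemma isMob_one : IsMob ((1 : RatFunc Fq ≃ₐ[Fq] RatFunc Fq) RatFunc.X) 1 0 0 1 := by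
  constructor
  · simp
  · simp

lemma mobOf_one (α : OnePoint Fq) : mobOf (1 : RatFunc Fq ≃ₐ[Fq] RatFunc Fq) α = α := by
  rw [mobOf_welldef isMob_one]; exact mob_id α

lemma mobOf_inv_comp (σ : RatFunc Fq ≃ₐ[Fq] RatFunc Fq) (α : OnePoint Fq) :
    mobOf σ⁻¹ (mobOf σ α) = α := by
  rw [← mobOf_mul, mul_inv_cancel, mobOf_one]

/-- automorphisms are determined by the image of X -/
lemma algEquiv_eq_one_of_X {σ : RatFunc Fq ≃ₐ[Fq] RatFunc Fq}
    (h : σ RatFunc.X = RatFunc.X) : σ = 1 := by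
  have halg : ∀ P : Fq[X], σ (algebraMap Fq[X] (RatFunc Fq) P)
      = algebraMap Fq[X] (RatFunc Fq) P := by
    intro P
    rw [algebraMap_eq_aeval', ← Polynomial.aeval_algHom_apply σ RatFunc.X P, h]
  ext x
  show σ x = x
  conv_lhs => rw [← RatFunc.num_div_denom x]
  rw [map_div₀, halg, halg, RatFunc.num_div_denom]

lemma mobOf_def (σ : RatFunc Fq ≃ₐ[Fq] RatFunc Fq) :
    mobOf σ = mob (mat σ).1 (mat σ).2.1 (mat σ).2.2.1 (mat σ).2.2.2 := rfl

lemma algEquiv_algebraMap_poly (σ : RatFunc Fq ≃ₐ[Fq] RatFunc Fq) (P : Fq[X]) :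
    σ (algebraMap Fq[X] (RatFunc Fq) P) = aeval (σ RatFunc.X) P := by
  rw [algebraMap_eq_aeval']
  exact (Polynomial.aeval_algHom_apply σ RatFunc.X P).symm

lemma isMob_trivial {φ : RatFunc Fq ≃ₐ[Fq] RatFunc Fq} {a b c d : Fq}
    (h : IsMob (φ RatFunc.X) a b c d) (hc : c = 0) (hb : b = 0) (had : a = d) :
    φ = 1 := by
  obtain ⟨hdet, heq⟩ := h
  subst hc hb
  rw [← had] at heq hdet
  have hd : a ≠ 0 := fun h0 => hdet (by rw [h0]; ring)
  apply algEquiv_eq_one_of_X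
  have hX : RatFunc.X * algebraMap Fq[X] (RatFunc Fq) (C 0 * Polynomial.X + C a)
      = algebraMap Fq[X] (RatFunc Fq) (C a * Polynomial.X + C 0) := by
    rw [← RatFunc.algebraMap_X, ← map_mul]
    congr 1
    rw [C_0]
    ring
  have hcmp := heq.trans hX.symm
  have hne : algebraMap Fq[X] (RatFunc Fq) (C 0 * Polynomial.X + C a) ≠ 0 :=
    RatFunc.algebraMap_ne_zero (linear_ne_zero'' (fun hpair => hd hpair.2))
  exact mul_right_cancel₀ hne hcmp

lemma hsub_eval_finite {a b c d x : Fq} (hx : c*x+d ≠ 0) {N : ℕ} {A : Fq[X]}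
    (hA : A.natDegree ≤ N) :
    (hsub N (C a * X + C b) (C c * X + C d) A).eval x
      = (c*x+d)^N * A.eval ((a*x+b)/(c*x+d)) := by
  rw [hsub, eval_finset_sum,
    Polynomial.eval_eq_sum_range' (lt_of_le_of_lt hA (Nat.lt_succ_self N)), Finset.mul_sum]
  refine Finset.sum_congr rfl ?_
  intro i hi
  rw [Finset.mem_range, Nat.lt_succ_iff] at hi
  have hsplit : (c*x+d)^N = (c*x+d)^i * (c*x+d)^(N-i) := by
    rw [← pow_add, Nat.add_sub_cancel' hi]
  simp only [eval_mul, eval_pow, eval_add, eval_C, eval_X]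
  rw [div_pow, hsplit]
  have hx' : x * c + d ≠ 0 := by rwa [mul_comm x c]
  field_simp

lemma hsub_eval_root {a b c d x : Fq} (hx : c*x+d = 0) {N : ℕ} {A : Fq[X]}
    (hA : A.natDegree ≤ N) :
    (hsub N (C a * X + C b) (C c * X + C d) A).eval x = A.coeff N * (a*x+b)^N := by
  rw [hsub, eval_finset_sum, Finset.sum_eq_single N]
  · simp only [Nat.sub_self, pow_zero, mul_one, eval_mul, eval_pow, eval_add, eval_C, eval_X]
  · intro i hi hiN
    rw [Finset.mem_range, Nat.lt_succ_iff] at hi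
    simp only [eval_mul, eval_pow, eval_add, eval_C, eval_X, hx]
    rw [zero_pow (by omega : N - i ≠ 0)]
    ring
  · intro hN
    exact absurd (Finset.self_mem_range_succ N) hN

lemma key_identity {f g : Fq[X]} (hf0 : f ≠ 0) (hg0 : g ≠ 0) {n : ℕ}
    (hfn : f.natDegree ≤ n) (hgn : g.natDegree ≤ n)
    {t : RatFunc Fq}
    (ht : t = algebraMap Fq[X] (RatFunc Fq) f / algebraMap Fq[X] (RatFunc Fq) g)
    {φ : RatFunc Fq ≃ₐ[Fq] RatFunc Fq} (hφt : φ t = t)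
    {a b c d : Fq} (hm : IsMob (φ RatFunc.X) a b c d) :
    f * hsub n (C a * X + C b) (C c * X + C d) g
      = g * hsub n (C a * X + C b) (C c * X + C d) f := by
  obtain ⟨hdet, heq⟩ := hm
  have hcd : ¬(c = 0 ∧ d = 0) := by
    rintro ⟨rfl, rfl⟩
    exact hdet (by ring)
  have hqpoly : (C c * X + C d : Fq[X]) ≠ 0 := linear_ne_zero'' hcd
  have hqK : algebraMap Fq[X] (RatFunc Fq) (C c * X + C d) ≠ 0 :=
    RatFunc.algebraMap_ne_zero hqpoly
  have hu : φ RatFunc.X = algebraMap Fq[X] (RatFunc Fq) (C a * X + C b)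
      / algebraMap Fq[X] (RatFunc Fq) (C c * X + C d) := by
    rw [← heq, mul_div_assoc, div_self hqK, mul_one]
  have hgK : algebraMap Fq[X] (RatFunc Fq) g ≠ 0 := RatFunc.algebraMap_ne_zero hg0
  have hφg : aeval (φ RatFunc.X) g ≠ 0 := by
    rw [← algEquiv_algebraMap_poly]
    intro h0
    exact hgK (φ.injective (by rw [h0, map_zero]))
  have hcross : algebraMap Fq[X] (RatFunc Fq) f * aeval (φ RatFunc.X) g
      = aeval (φ RatFunc.X) f * algebraMap Fq[X] (RatFunc Fq) g := by
    have h2 : φ t = aeval (φ RatFunc.X) f / aeval (φ RatFunc.X) g := by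
      rw [ht, map_div₀, algEquiv_algebraMap_poly, algEquiv_algebraMap_poly]
    rw [hφt, ht] at h2
    rw [div_eq_div_iff hgK hφg] at h2
    exact h2
  apply IsFractionRing.injective Fq[X] (RatFunc Fq)
  rw [map_mul, map_mul, hsub_spec hqpoly _ g hgn, hsub_spec hqpoly _ f hfn, ← hu]
  linear_combination (algebraMap Fq[X] (RatFunc Fq) (C c * X + C d))^n * hcross

section WithH

variable {f g : Polynomial Fq} {n : ℕ} {H : OnePoint Fq → OnePoint Fq}

lemma H_inv_fin (hcop : IsCoprime f g)
    (hn : n = max f.natDegree g.natDegree) (h1 : 1 ≤ n)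
    (hf0 : f ≠ 0) (hg0 : g ≠ 0)
    (hH1 : ∀ α : Fq, g.eval α ≠ 0 → H α = ((f.eval α / g.eval α : Fq) : OnePoint Fq))
    (hH2 : ∀ α : Fq, g.eval α = 0 → H α = OnePoint.infty)
    (hH3 : H OnePoint.infty =
      if g.natDegree < f.natDegree then OnePoint.infty
      else if f.natDegree < g.natDegree then ((0 : Fq) : OnePoint Fq)
      else ((f.leadingCoeff / g.leadingCoeff : Fq) : OnePoint Fq))
    {a b c d : Fq} (hdet : a*d - b*c ≠ 0)
    (hid : f * hsub n (C a * X + C b) (C c * X + C d) g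
         = g * hsub n (C a * X + C b) (C c * X + C d) f)
    (x : Fq) : H (mob a b c d (x : OnePoint Fq)) = H x := by
  have hfn : f.natDegree ≤ n := hn ▸ le_max_left _ _
  have hgn : g.natDegree ≤ n := hn ▸ le_max_right _ _
  obtain ⟨U, V, hUV⟩ := hcop
  have NCR : ∀ y : Fq, ¬(f.eval y = 0 ∧ g.eval y = 0) := by
    rintro y ⟨hy1, hy2⟩
    have := congrArg (fun P => eval y P) hUV
    simp [hy1, hy2] at this
  have hidev := congrArg (fun P => eval x P) hid
  simp only [eval_mul] at hidev
  rw [mob_coe]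
  by_cases hx : c*x+d = 0
  · have hab : a*x+b ≠ 0 := by
      intro h0
      exact hdet (by linear_combination a*hx - c*h0)
    rw [hsub_eval_root hx hgn, hsub_eval_root hx hfn] at hidev
    have hkey : f.eval x * g.coeff n = g.eval x * f.coeff n :=
      mul_right_cancel₀ (pow_ne_zero n hab) (by linear_combination hidev)
    rw [if_pos hx, hH3]
    rcases lt_trichotomy g.natDegree f.natDegree with hlt | heqd | hgt
    · rw [if_pos hlt]
      have hfdeg : f.natDegree = n := by
        rw [hn, max_eq_left (le_of_lt hlt)]
      have hgcoeff : g.coeff n = 0 := coeff_eq_zero_of_natDegree_lt (by omega)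
      have hfc : f.coeff n ≠ 0 := by
        rw [← hfdeg, coeff_natDegree]
        exact leadingCoeff_ne_zero.mpr hf0
      have hgx : g.eval x = 0 := by
        have h0 : g.eval x * f.coeff n = 0 := by rw [← hkey, hgcoeff]; ring
        exact (mul_eq_zero.mp h0).resolve_right hfc
      rw [hH2 x hgx]
    · have hfdeg : f.natDegree = n := by rw [hn, heqd, max_self]
      have hgdeg : g.natDegree = n := by rw [hn, heqd, max_self]
      rw [if_neg (by omega), if_neg (by omega)]
      have hfc : f.coeff n ≠ 0 := by
        rw [← hfdeg, coeff_natDegree]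
        exact leadingCoeff_ne_zero.mpr hf0
      have hgc : g.coeff n ≠ 0 := by
        rw [← hgdeg, coeff_natDegree]
        exact leadingCoeff_ne_zero.mpr hg0
      have hgx : g.eval x ≠ 0 := by
        intro h0
        have hfx : f.eval x ≠ 0 := fun h0' => NCR x ⟨h0', h0⟩
        rw [h0] at hkey
        exact hfx ((mul_eq_zero.mp (by linear_combination hkey)).resolve_right hgc)
      rw [hH1 x hgx]
      congr 1
      rw [div_eq_div_iff (leadingCoeff_ne_zero.mpr hg0) hgx]
      have hlf : f.leadingCoeff = f.coeff n := by rw [← hfdeg, coeff_natDegree]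
      have hlg : g.leadingCoeff = g.coeff n := by rw [← hgdeg, coeff_natDegree]
      rw [hlf, hlg]
      linear_combination -hkey
    · rw [if_neg (by omega), if_pos hgt]
      have hgdeg : g.natDegree = n := by
        rw [hn, max_eq_right (le_of_lt hgt)]
      have hfcoeff : f.coeff n = 0 := coeff_eq_zero_of_natDegree_lt (by omega)
      have hgc : g.coeff n ≠ 0 := by
        rw [← hgdeg, coeff_natDegree]
        exact leadingCoeff_ne_zero.mpr hg0
      have hfx : f.eval x = 0 := by
        have h0 : f.eval x * g.coeff n = 0 := by rw [hkey, hfcoeff]; ring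
        exact (mul_eq_zero.mp h0).resolve_right hgc
      have hgx : g.eval x ≠ 0 := fun h0 => NCR x ⟨hfx, h0⟩
      rw [hH1 x hgx, hfx]
      simp
  · rw [if_neg hx]
    set β := (a*x+b)/(c*x+d) with hβ
    rw [hsub_eval_finite hx hgn, hsub_eval_finite hx hfn] at hidev
    have hkey : f.eval x * g.eval β = g.eval x * f.eval β :=
      mul_left_cancel₀ (pow_ne_zero n hx) (by linear_combination hidev)
    by_cases hgx : g.eval x = 0
    · have hfx : f.eval x ≠ 0 := fun h0 => NCR x ⟨h0, hgx⟩
      have hgβ : g.eval β = 0 := by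
        have h0 : f.eval x * g.eval β = 0 := by rw [hkey, hgx]; ring
        exact (mul_eq_zero.mp h0).resolve_left hfx
      rw [hH2 β hgβ, hH2 x hgx]
    · by_cases hgβ : g.eval β = 0
      · exfalso
        have hfβ : f.eval β ≠ 0 := fun h0 => NCR β ⟨h0, hgβ⟩
        rw [hgβ] at hkey
        have h0 : g.eval x * f.eval β = 0 := by linear_combination -hkey
        rcases mul_eq_zero.mp h0 with h | h
        · exact hgx h
        · exact hfβ h
      · rw [hH1 β hgβ, hH1 x hgx]
        congr 1
        rw [div_eq_div_iff hgβ hgx]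
        linear_combination -hkey

lemma H_inv (hcop : IsCoprime f g)
    (hn : n = max f.natDegree g.natDegree) (h1 : 1 ≤ n)
    (hf0 : f ≠ 0) (hg0 : g ≠ 0)
    {t : RatFunc Fq}
    (ht : t = algebraMap Fq[X] (RatFunc Fq) f / algebraMap Fq[X] (RatFunc Fq) g)
    (hH1 : ∀ α : Fq, g.eval α ≠ 0 → H α = ((f.eval α / g.eval α : Fq) : OnePoint Fq))
    (hH2 : ∀ α : Fq, g.eval α = 0 → H α = OnePoint.infty)
    (hH3 : H OnePoint.infty =
      if g.natDegree < f.natDegree then OnePoint.infty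
      else if f.natDegree < g.natDegree then ((0 : Fq) : OnePoint Fq)
      else ((f.leadingCoeff / g.leadingCoeff : Fq) : OnePoint Fq))
    (φ : RatFunc Fq ≃ₐ[Fq] RatFunc Fq) (hφt : φ t = t) (α : OnePoint Fq) :
    H (mobOf φ α) = H α := by
  have hfin : ∀ (ψ : RatFunc Fq ≃ₐ[Fq] RatFunc Fq), ψ t = t → ∀ x : Fq,
      H (mobOf ψ (x : OnePoint Fq)) = H x := by
    intro ψ hψ x
    have hspec := mat_spec ψ
    rw [mobOf_def]
    exact H_inv_fin hcop hn h1 hf0 hg0 hH1 hH2 hH3 hspec.1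
      (key_identity hf0 hg0 (hn ▸ le_max_left _ _) (hn ▸ le_max_right _ _) ht hψ hspec) x
  cases α with
  | coe x => exact hfin φ hφt x
  | infty =>
    cases hγ : mobOf φ ∞ with
    | infty => rfl
    | coe y =>
      have hφ' : φ⁻¹ t = t := by
        conv_lhs => rw [← hφt]
        rw [← AlgEquiv.mul_apply, inv_mul_cancel, AlgEquiv.one_apply]
      have h2 : mobOf φ⁻¹ (y : OnePoint Fq) = ∞ := by
        rw [← hγ, mobOf_inv_comp]
      have h3 := hfin φ⁻¹ hφ' y
      rw [h2] at h3
      exact h3.symm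

end WithH


lemma fiber_card_le [Fintype Fq] [DecidableEq (OnePoint Fq)]
    {f g : Polynomial Fq} (hcop : IsCoprime f g) {n : ℕ}
    (hn : n = max f.natDegree g.natDegree) (h1 : 1 ≤ n)
    (hf0 : f ≠ 0) (hg0 : g ≠ 0)
    {H : OnePoint Fq → OnePoint Fq}
    (hH1 : ∀ α : Fq, g.eval α ≠ 0 → H α = ((f.eval α / g.eval α : Fq) : OnePoint Fq))
    (hH2 : ∀ α : Fq, g.eval α = 0 → H α = OnePoint.infty)
    (hH3 : H OnePoint.infty =
      if g.natDegree < f.natDegree then OnePoint.infty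
      else if f.natDegree < g.natDegree then ((0 : Fq) : OnePoint Fq)
      else ((f.leadingCoeff / g.leadingCoeff : Fq) : OnePoint Fq))
    (c : OnePoint Fq) :
    (Finset.univ.filter (fun α => H α = c)).card ≤ n := by
  have hfn : f.natDegree ≤ n := hn ▸ le_max_left _ _
  have hgn : g.natDegree ≤ n := hn ▸ le_max_right _ _
  cases c with
  | infty =>
    have hroots : ∀ x : Fq, H x = (∞ : OnePoint Fq) → g.eval x = 0 := by
      intro x hx
      by_contra hgx
      rw [hH1 x hgx] at hx
      exact OnePoint.coe_ne_infty _ hx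
    set gr : Finset (OnePoint Fq)
      := g.roots.toFinset.image (fun x : Fq => (x : OnePoint Fq)) with hgr
    have hgrcard : gr.card ≤ g.natDegree := by
      refine le_trans (Finset.card_image_le) ?_
      exact le_trans (g.roots.toFinset_card_le) (g.card_roots')
    by_cases hinf : (∞ : OnePoint Fq) ∈ Finset.univ.filter (fun α => H α = (∞ : OnePoint Fq))
    · have hHinf : H ∞ = ∞ := (Finset.mem_filter.mp hinf).2
      have hlt : g.natDegree < f.natDegree := by
        by_contra hge
        rw [hH3, if_neg hge] at hHinf
        split_ifs at hHinf <;> exact OnePoint.coe_ne_infty _ hHinf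
      have hgdeg : g.natDegree + 1 ≤ n := by
        have : f.natDegree = n := by rw [hn, max_eq_left (le_of_lt hlt)]
        omega
      have hsub2 : Finset.univ.filter (fun α => H α = (∞ : OnePoint Fq)) ⊆ insert ∞ gr := by
        intro α hα
        rw [Finset.mem_filter] at hα
        cases α with
        | infty => exact Finset.mem_insert_self _ _
        | coe x =>
          refine Finset.mem_insert_of_mem ?_
          rw [hgr]
          refine Finset.mem_image_of_mem _ ?_
          rw [Multiset.mem_toFinset, mem_roots hg0]
          exact hroots x hα.2
      calc (Finset.univ.filter (fun α => H α = (∞ : OnePoint Fq))).card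
          ≤ (insert (∞ : OnePoint Fq) gr).card := Finset.card_le_card hsub2
        _ ≤ gr.card + 1 := Finset.card_insert_le _ _
        _ ≤ g.natDegree + 1 := by omega
        _ ≤ n := hgdeg
    · have hsub2 : Finset.univ.filter (fun α => H α = (∞ : OnePoint Fq)) ⊆ gr := by
        intro α hα
        have hαne : α ≠ ∞ := fun h0 => hinf (h0 ▸ hα)
        rw [Finset.mem_filter] at hα
        cases α with
        | infty => exact absurd rfl hαne
        | coe x =>
          rw [hgr]
          refine Finset.mem_image_of_mem _ ?_
          rw [Multiset.mem_toFinset, mem_roots hg0]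
          exact hroots x hα.2
      exact le_trans (Finset.card_le_card hsub2) (le_trans hgrcard hgn)
  | coe v =>
    set R : Polynomial Fq := f - C v * g with hRdef
    have hR0 : R ≠ 0 := by
      intro h0
      have hfg : f = C v * g := by
        have := sub_eq_zero.mp h0
        exact this
      have hdvd : g ∣ f := ⟨C v, by rw [hfg]; ring⟩
      have hunit : IsUnit g := hcop.isUnit_of_dvd' hdvd dvd_rfl
      have hgdeg0 : g.natDegree = 0 := natDegree_eq_zero_of_isUnit hunit
      have hfdeg0 : f.natDegree = 0 := by
        rw [hfg]
        refine le_antisymm (le_trans (natDegree_mul_le) ?_) (Nat.zero_le _)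
        simp [hgdeg0]
      omega
    have hRdeg : R.natDegree ≤ n := by
      refine le_trans (natDegree_sub_le _ _) (max_le hfn (le_trans natDegree_mul_le ?_))
      simp only [natDegree_C, zero_add]
      exact hgn
    have hroots : ∀ x : Fq, H x = ((v : Fq) : OnePoint Fq) → R.eval x = 0 := by
      intro x hx
      have hgx : g.eval x ≠ 0 := by
        intro h0
        rw [hH2 x h0] at hx
        exact OnePoint.infty_ne_coe _ hx
      rw [hH1 x hgx] at hx
      rw [OnePoint.coe_eq_coe, div_eq_iff hgx] at hx
      simp only [hRdef, eval_sub, eval_mul, eval_C]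
      rw [hx]
      ring
    set Rr : Finset (OnePoint Fq)
      := R.roots.toFinset.image (fun x : Fq => (x : OnePoint Fq)) with hRr
    have hRrcard : Rr.card ≤ R.natDegree := by
      refine le_trans (Finset.card_image_le) ?_
      exact le_trans (R.roots.toFinset_card_le) (R.card_roots')
    have hsubfin : ∀ α ∈ Finset.univ.filter (fun α => H α = ((v : Fq) : OnePoint Fq)),
        α ≠ ∞ → α ∈ Rr := by
      intro α hα hαne
      rw [Finset.mem_filter] at hα
      cases α with
      | infty => exact absurd rfl hαne
      | coe x =>
        rw [hRr]
        refine Finset.mem_image_of_mem _ ?_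
        rw [Multiset.mem_toFinset, mem_roots hR0]
        exact hroots x hα.2
    by_cases hinf : (∞ : OnePoint Fq) ∈ Finset.univ.filter (fun α => H α = ((v : Fq) : OnePoint Fq))
    · have hHinf : H ∞ = ((v : Fq) : OnePoint Fq) := (Finset.mem_filter.mp hinf).2
      rw [hH3] at hHinf
      have hRdeg2 : R.natDegree + 1 ≤ n := by
        split_ifs at hHinf with hc1 hc2
        · exact absurd hHinf (OnePoint.infty_ne_coe _)
        · -- f.natDegree < g.natDegree, v = 0
          rw [OnePoint.coe_eq_coe] at hHinf
          have hgdeg : g.natDegree = n := by rw [hn, max_eq_right (le_of_lt hc2)]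
          have hRf : R = f := by rw [hRdef, ← hHinf, C_0]; ring
          rw [hRf]
          omega
        · -- equal degrees, v = lcf / lcg
          rw [OnePoint.coe_eq_coe] at hHinf
          have heqd : f.natDegree = g.natDegree := by omega
          have hfdeg : f.natDegree = n := by rw [hn, heqd, max_self]
          have hgdeg : g.natDegree = n := by rw [hn, ← heqd, max_self]
          have hgc : g.coeff n ≠ 0 := by
            rw [← hgdeg, coeff_natDegree]
            exact leadingCoeff_ne_zero.mpr hg0
          have hcoeffn : R.coeff n = 0 := by
            simp only [hRdef, coeff_sub, coeff_C_mul]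
            rw [← hHinf]
            have hlf : f.leadingCoeff = f.coeff n := by rw [← hfdeg, coeff_natDegree]
            have hlg : g.leadingCoeff = g.coeff n := by rw [← hgdeg, coeff_natDegree]
            rw [hlf, hlg, div_mul_cancel₀ _ hgc]
            ring
          have hRn : R.natDegree ≠ n := by
            intro hRn
            apply hR0
            apply leadingCoeff_eq_zero.mp
            rw [← coeff_natDegree, hRn]
            exact hcoeffn
          omega
      calc (Finset.univ.filter (fun α => H α = ((v : Fq) : OnePoint Fq))).card
          ≤ (insert (∞ : OnePoint Fq) Rr).card := by
            refine Finset.card_le_card ?_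
            intro α hα
            by_cases hαe : α = ∞
            · rw [hαe]; exact Finset.mem_insert_self _ _
            · exact Finset.mem_insert_of_mem (hsubfin α hα hαe)
        _ ≤ Rr.card + 1 := Finset.card_insert_le _ _
        _ ≤ R.natDegree + 1 := by omega
        _ ≤ n := hRdeg2
    · calc (Finset.univ.filter (fun α => H α = ((v : Fq) : OnePoint Fq))).card
          ≤ Rr.card := by
            refine Finset.card_le_card ?_
            intro α hα
            refine hsubfin α hα ?_
            intro h0
            exact hinf (h0 ▸ hα)
        _ ≤ R.natDegree := hRrcard
        _ ≤ n := hRdeg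

lemma orbit_count {G : Type*} [Group G] [Fintype G]
    [Fintype Fq] [MulAction G (OnePoint Fq)] {n : ℕ}
    (hcardG : Fintype.card G = n)
    {H : OnePoint Fq → OnePoint Fq}
    (hinv : ∀ (σ : G) (α : OnePoint Fq), H (σ • α) = H α)
    (hfix : ∀ σ : G, σ ≠ 1 → Fintype.card (MulAction.fixedBy (OnePoint Fq) σ) ≤ 2) :
    (Set.range H).ncard * n ≤ (Fintype.card Fq + 1) + (n - 1) * 2 := by
  classical
  haveI : Fintype (Quotient (MulAction.orbitRel G (OnePoint Fq))) := Fintype.ofFinite _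
  set m := Fintype.card (Quotient (MulAction.orbitRel G (OnePoint Fq))) with hmdef
  have hburn := MulAction.sum_card_fixedBy_eq_card_orbits_mul_card_group G (OnePoint Fq)
  have hcardP : Fintype.card (OnePoint Fq) = Fintype.card Fq + 1 := Fintype.card_option
  have hcard1 : Fintype.card (MulAction.fixedBy (OnePoint Fq) (1 : G))
      = Fintype.card Fq + 1 := by
    have huniv : MulAction.fixedBy (OnePoint Fq) (1 : G) = Set.univ := by
      ext α
      simp [MulAction.mem_fixedBy]
    calc Fintype.card (MulAction.fixedBy (OnePoint Fq) (1 : G))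
        = (MulAction.fixedBy (OnePoint Fq) (1 : G)).ncard := by
          rw [Set.ncard_eq_toFinset_card', Set.toFinset_card]
      _ = Fintype.card Fq + 1 := by
          rw [huniv, Set.ncard_univ, Nat.card_eq_fintype_card, hcardP]
  have hsum_le : ∑ σ : G, Fintype.card (MulAction.fixedBy (OnePoint Fq) σ)
      ≤ (Fintype.card Fq + 1) + (n-1) * 2 := by
    rw [← Finset.add_sum_erase Finset.univ _ (Finset.mem_univ (1 : G))]
    refine add_le_add (le_of_eq hcard1) ?_
    calc ∑ σ ∈ Finset.univ.erase (1:G), Fintype.card (MulAction.fixedBy (OnePoint Fq) σ)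
        ≤ (Finset.univ.erase (1:G)).card • 2 :=
          Finset.sum_le_card_nsmul _ _ _ (fun σ hσ => hfix σ (Finset.ne_of_mem_erase hσ))
      _ = (n-1) * 2 := by
          rw [Finset.card_erase_of_mem (Finset.mem_univ _), Finset.card_univ, hcardG,
            smul_eq_mul]
  have hmn : m * n ≤ (Fintype.card Fq + 1) + (n-1)*2 := by
    rw [hcardG] at hburn
    rw [← hburn]
    exact hsum_le
  have hk_le : (Set.range H).ncard ≤ m := by
    have hresp : ∀ (α β : OnePoint Fq), MulAction.orbitRel G (OnePoint Fq) α β → H α = H β := by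
      intro α β hr
      obtain ⟨σ, hσ⟩ := MulAction.mem_orbit_iff.mp (MulAction.orbitRel_apply.mp hr)
      rw [← hσ, hinv]
    set Φ : Quotient (MulAction.orbitRel G (OnePoint Fq)) → OnePoint Fq :=
      Quotient.lift H hresp with hΦ
    have hrange : Set.range H = Set.range Φ := by
      ext y
      constructor
      · rintro ⟨α, rfl⟩
        exact ⟨Quotient.mk _ α, rfl⟩
      · rintro ⟨q, rfl⟩
        obtain ⟨α, rfl⟩ := Quotient.exists_rep q
        exact ⟨α, rfl⟩
    rw [hrange, ← Set.image_univ]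
    refine le_trans (Set.ncard_image_le Set.finite_univ) ?_
    rw [Set.ncard_univ, Nat.card_eq_fintype_card]
  calc (Set.range H).ncard * n ≤ m * n := Nat.mul_le_mul_right n hk_le
    _ ≤ (Fintype.card Fq + 1) + (n-1)*2 := hmn

end BBQAux

/-- Bartoli–Borges–Quoos: if `h = f/g ∈ F_q(x)` with `f, g` coprime, `n = deg h ≥ 1`, and
`F_q(x)/F_q(h)` is Galois of degree `n`, then the value set
`V_h = {h(α) : α ∈ P¹(F_q)} ⊆ P¹(F_q)` satisfies `⌈(q+1)/n⌉ ≤ #V_h ≤ ⌈(q+1)/n⌉ + 1`. -/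
theorem stmt_6 (Fq : Type*) [Field Fq] [Fintype Fq]
    (f g : Polynomial Fq) (hcop : IsCoprime f g)
    (n : ℕ) (hn : n = max f.natDegree g.natDegree) (h1 : 1 ≤ n)
    (t : RatFunc Fq)
    (ht : t = algebraMap (Polynomial Fq) (RatFunc Fq) f /
      algebraMap (Polynomial Fq) (RatFunc Fq) g)
    (hGal : IsGalois ↥(IntermediateField.adjoin Fq {t}) (RatFunc Fq))
    (hdeg : Module.finrank ↥(IntermediateField.adjoin Fq {t}) (RatFunc Fq) = n)
    (H : OnePoint Fq → OnePoint Fq)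
    (hH1 : ∀ α : Fq, g.eval α ≠ 0 → H α = ((f.eval α / g.eval α : Fq) : OnePoint Fq))
    (hH2 : ∀ α : Fq, g.eval α = 0 → H α = OnePoint.infty)
    (hH3 : H OnePoint.infty =
      if g.natDegree < f.natDegree then OnePoint.infty
      else if f.natDegree < g.natDegree then ((0 : Fq) : OnePoint Fq)
      else ((f.leadingCoeff / g.leadingCoeff : Fq) : OnePoint Fq)) :
    (Fintype.card Fq + n) / n ≤ (Set.range H).ncard ∧
      (Set.range H).ncard ≤ (Fintype.card Fq + n) / n + 1 := by
  classical
  have hf0 : f ≠ 0 := by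
    intro h0
    rw [h0] at hcop hn
    have hunit : IsUnit g := isCoprime_zero_left.mp hcop
    simp [natDegree_eq_zero_of_isUnit hunit] at hn
    omega
  have hg0 : g ≠ 0 := by
    intro h0
    rw [h0] at hcop hn
    have hunit : IsUnit f := isCoprime_zero_right.mp hcop
    simp [natDegree_eq_zero_of_isUnit hunit] at hn
    omega
  have hcardP : Fintype.card (OnePoint Fq) = Fintype.card Fq + 1 := Fintype.card_option
  set k := (Set.range H).ncard with hkdef
  have hkimg : (Finset.image H Finset.univ).card = k := by
    rw [hkdef, ← Set.ncard_coe_finset]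
    congr 1
    ext y
    simp
  have hfib := Finset.card_eq_sum_card_fiberwise
    (fun (x : OnePoint Fq) (_ : x ∈ Finset.univ) => Finset.mem_image_of_mem H (Finset.mem_univ x))
  rw [Finset.card_univ, hcardP] at hfib
  have hlow : Fintype.card Fq + 1 ≤ k * n := by
    rw [← hkimg]
    calc Fintype.card Fq + 1
        = ∑ c ∈ Finset.image H Finset.univ,
            (Finset.univ.filter (fun α => H α = c)).card := hfib
      _ ≤ (Finset.image H Finset.univ).card • n :=
          Finset.sum_le_card_nsmul _ _ _
            (fun c _ => fiber_card_le hcop hn h1 hf0 hg0 hH1 hH2 hH3 c)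
      _ = (Finset.image H Finset.univ).card * n := by rw [smul_eq_mul]
  constructor
  · rw [Nat.add_div_right _ (by omega : 0 < n)]
    have h2 : Fintype.card Fq / n < k := by
      rw [Nat.div_lt_iff_lt_mul (by omega : 0 < n)]
      omega
    omega
  · -- upper bound via the Galois action
    haveI hFD : FiniteDimensional (↥(IntermediateField.adjoin Fq {t})) (RatFunc Fq) :=
      FiniteDimensional.of_finrank_pos (by rw [hdeg]; omega)
    have hcardG :
        Fintype.card (RatFunc Fq ≃ₐ[↥(IntermediateField.adjoin Fq {t})] RatFunc Fq) = n := by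
      rw [← Nat.card_eq_fintype_card, IsGalois.card_aut_eq_finrank, hdeg]
    set ρ : (RatFunc Fq ≃ₐ[↥(IntermediateField.adjoin Fq {t})] RatFunc Fq)
        → (RatFunc Fq ≃ₐ[Fq] RatFunc Fq) := fun σ => AlgEquiv.restrictScalars Fq σ with hρdef
    have hρ1 : ρ 1 = 1 := by ext x; rfl
    have hρmul : ∀ σ τ, ρ (σ * τ) = ρ σ * ρ τ := by intro σ τ; ext x; rfl
    have hρinv : ∀ σ, ρ σ⁻¹ = (ρ σ)⁻¹ := by
      intro σ
      ext x
      rfl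
    letI : MulAction (RatFunc Fq ≃ₐ[↥(IntermediateField.adjoin Fq {t})] RatFunc Fq)
        (OnePoint Fq) :=
      { smul := fun σ α => mobOf (ρ σ)⁻¹ α
        one_smul := fun α => by
          show mobOf (ρ 1)⁻¹ α = α
          rw [hρ1, inv_one, mobOf_one]
        mul_smul := fun σ τ α => by
          show mobOf (ρ (σ * τ))⁻¹ α = mobOf (ρ σ)⁻¹ (mobOf (ρ τ)⁻¹ α)
          rw [hρmul, mul_inv_rev, mobOf_mul] }
    have hsmul : ∀ (σ : RatFunc Fq ≃ₐ[↥(IntermediateField.adjoin Fq {t})] RatFunc Fq)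
        (α : OnePoint Fq), σ • α = mobOf (ρ σ)⁻¹ α := fun _ _ => rfl
    have htF : t ∈ IntermediateField.adjoin Fq {t} :=
      IntermediateField.mem_adjoin_simple_self Fq t
    have htfix : ∀ σ : (RatFunc Fq ≃ₐ[↥(IntermediateField.adjoin Fq {t})] RatFunc Fq),
        (ρ σ) t = t := by
      intro σ
      have hcomm : (ρ σ) (algebraMap (↥(IntermediateField.adjoin Fq {t})) (RatFunc Fq) ⟨t, htF⟩)
          = algebraMap (↥(IntermediateField.adjoin Fq {t})) (RatFunc Fq) ⟨t, htF⟩ := by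
        show (AlgEquiv.restrictScalars Fq σ) _ = _
        rw [AlgEquiv.restrictScalars_apply, AlgEquiv.commutes]
      simpa using hcomm
    have hinv : ∀ (σ : RatFunc Fq ≃ₐ[↥(IntermediateField.adjoin Fq {t})] RatFunc Fq)
        (α : OnePoint Fq), H (σ • α) = H α := by
      intro σ α
      rw [hsmul]
      refine H_inv hcop hn h1 hf0 hg0 ht hH1 hH2 hH3 ((ρ σ)⁻¹) ?_ α
      rw [← hρinv]
      exact htfix σ⁻¹
    have hfixle : ∀ σ : (RatFunc Fq ≃ₐ[↥(IntermediateField.adjoin Fq {t})] RatFunc Fq),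
        σ ≠ 1 → Fintype.card (MulAction.fixedBy (OnePoint Fq) σ) ≤ 2 := by
      intro σ hσ
      set φ := (ρ σ)⁻¹ with hφdef
      have hspec := mat_spec φ
      have hQ : ¬((mat φ).2.2.1 = 0 ∧ (mat φ).2.1 = 0 ∧ (mat φ).1 = (mat φ).2.2.2) := by
        rintro ⟨hc, hb, had⟩
        have hφ1 : φ = 1 := isMob_trivial hspec hc hb had
        apply hσ
        have hρσ : ρ σ = 1 := by
          rw [← inv_inv (ρ σ), ← hφdef, hφ1, inv_one]
        have hinj : Function.Injective ρ := fun x y h =>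
          AlgEquiv.restrictScalars_injective Fq h
        apply hinj
        rw [hρσ, hρ1]
      have hsets : MulAction.fixedBy (OnePoint Fq) σ
          = {α : OnePoint Fq |
              mob (mat φ).1 (mat φ).2.1 (mat φ).2.2.1 (mat φ).2.2.2 α = α} := by
        ext α
        rw [MulAction.mem_fixedBy, hsmul, ← hφdef, mobOf_def]
        rfl
      have hcard2 : (MulAction.fixedBy (OnePoint Fq) σ).ncard ≤ 2 := by
        rw [hsets]
        exact mob_fixed_le hspec.1 hQ
      rw [Set.ncard_eq_toFinset_card', Set.toFinset_card] at hcard2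
      exact hcard2
    have hup := orbit_count hcardG hinv hfixle
    rw [← hkdef] at hup
    have hq1 : 1 ≤ Fintype.card Fq := Fintype.card_pos
    have hkn : k * n ≤ (Fintype.card Fq - 1) + 2 * n := by omega
    have hk2 : k ≤ (Fintype.card Fq - 1)/n + 2 := by
      rw [← Nat.add_mul_div_right _ _ (by omega : 0 < n)]
      rw [Nat.le_div_iff_mul_le (by omega : 0 < n)]
      exact hkn
    have hmono : (Fintype.card Fq - 1)/n ≤ Fintype.card Fq / n :=
      Nat.div_le_div_right (by omega)
    rw [Nat.add_div_right _ (by omega : 0 < n)]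
    omega
end

section
/- Let f ∈ F_q[x] be a non-constant polynomial such that the field extension F_q(x)/F_q(f(x)) is Galois. Then f is a minimal value set polynomial, i.e., the value set V_f' = { f(α) : α ∈ F_q } has cardinality ⌈q / deg f⌉ + ε with ε ∈ {0, 1} and in fact #V_f' ≥ ⌊(q−1)/deg f⌋ + 1 with equality characterizing minimality. -/
open Polynomial IntermediateField Finset

section Stmt7Aux

variable {Fq : Type*} [Field Fq]

lemma aux_comp_ne_zero {f q : Fq[X]} (hdeg : 0 < f.natDegree) (hq : q ≠ 0) : q.comp f ≠ 0 := by
  intro h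
  have h2 := leadingCoeff_comp (p := q) (q := f) (by omega)
  rw [h, leadingCoeff_zero] at h2
  exact (mul_ne_zero (leadingCoeff_ne_zero.2 hq)
    (pow_ne_zero _ (leadingCoeff_ne_zero.2 (fun h0 => by simp [h0] at hdeg)))) h2.symm

lemma aux_aeval_phi (p g : Fq[X]) :
    Polynomial.aeval (algebraMap Fq[X] (RatFunc Fq) p) g
      = algebraMap Fq[X] (RatFunc Fq) (g.comp p) := by
  rw [Polynomial.comp, ← Polynomial.algebraMap_eq, ← Polynomial.aeval_def]
  exact Polynomial.aeval_algHom_apply (IsScalarTower.toAlgHom Fq Fq[X] (RatFunc Fq)) p g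

lemma aux_indep (f : Fq[X]) (hdeg : 0 < f.natDegree)
    (c : ℕ → RatFunc Fq)
    (hc : ∀ i, c i ∈ adjoin Fq {algebraMap (Polynomial Fq) (RatFunc Fq) f})
    (hsum : ∑ i ∈ Finset.range f.natDegree, c i * RatFunc.X ^ i = 0) :
    ∀ i ∈ Finset.range f.natDegree, c i = 0 := by
  classical
  set n := f.natDegree with hn
  set fr := algebraMap (Polynomial Fq) (RatFunc Fq) f with hfr
  have hwit : ∀ i : ℕ, ∃ rs : Fq[X] × Fq[X], (Polynomial.aeval fr rs.2 ≠ 0) ∧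
      c i * Polynomial.aeval fr rs.2 = Polynomial.aeval fr rs.1 := by
    intro i
    obtain ⟨r, s, hrs⟩ := (mem_adjoin_simple_iff Fq (c i)).1 (hc i)
    by_cases hs : Polynomial.aeval fr s = 0
    · refine ⟨(0, 1), by simp, ?_⟩
      rw [hrs, hs, div_zero]; simp
    · exact ⟨(r, s), hs, by rw [hrs, div_mul_cancel₀ _ hs]⟩
  choose rs hsne hmul using hwit
  set Q : ℕ → Fq[X] := fun i => (rs i).1 * ∏ j ∈ (Finset.range n).erase i, (rs j).2 with hQdef
  have hQev : ∀ i ∈ Finset.range n, Polynomial.aeval fr (Q i)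
      = c i * ∏ j ∈ Finset.range n, Polynomial.aeval fr (rs j).2 := by
    intro i hi
    rw [hQdef]
    simp only [map_mul, map_prod]
    rw [← hmul i, ← Finset.mul_prod_erase _ _ hi]
    ring
  have hQ : ∑ i ∈ Finset.range n, Polynomial.aeval fr (Q i) * RatFunc.X ^ i = 0 := by
    rw [Finset.sum_congr rfl (fun i hi => by rw [hQev i hi])]
    have heq : ∑ i ∈ Finset.range n, c i *
        (∏ j ∈ Finset.range n, Polynomial.aeval fr (rs j).2) * RatFunc.X ^ i
        = (∏ j ∈ Finset.range n, Polynomial.aeval fr (rs j).2) *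
          ∑ i ∈ Finset.range n, c i * RatFunc.X ^ i := by
      rw [Finset.mul_sum]; exact Finset.sum_congr rfl (fun i _ => by ring)
    rw [heq, hsum, mul_zero]
  have h2 : ∑ i ∈ Finset.range n, (Q i).comp f * Polynomial.X ^ i = (0 : Fq[X]) := by
    apply RatFunc.algebraMap_injective Fq
    rw [map_sum, map_zero]
    rw [← hQ]
    refine Finset.sum_congr rfl (fun i _ => ?_)
    rw [map_mul, map_pow, RatFunc.algebraMap_X, aux_aeval_phi]
  have hQ0 : ∀ i ∈ Finset.range n, Q i = 0 := by
    by_contra hcon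
    push_neg at hcon
    obtain ⟨i₁, hi₁, hQi₁⟩ := hcon
    set T := (Finset.range n).filter (fun i => Q i ≠ 0) with hT
    obtain ⟨i₀, hi₀T, hmax⟩ := T.exists_max_image (fun i => (Q i).natDegree * n + i)
      ⟨i₁, Finset.mem_filter.2 ⟨hi₁, hQi₁⟩⟩
    obtain ⟨hi₀r, hQi₀⟩ := Finset.mem_filter.1 hi₀T
    set D := (Q i₀).natDegree * n + i₀ with hD
    have hterm : ∀ i, Q i ≠ 0 → ((Q i).comp f * Polynomial.X ^ i).natDegree
        = (Q i).natDegree * n + i := by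
      intro i hq
      rw [natDegree_mul (aux_comp_ne_zero hdeg hq) (pow_ne_zero _ Polynomial.X_ne_zero),
        natDegree_comp, natDegree_X_pow]
    have hcoeff := congrArg (fun g => Polynomial.coeff g D) h2
    simp only [finset_sum_coeff, coeff_zero] at hcoeff
    rw [Finset.sum_eq_single i₀ ?_ ?_] at hcoeff
    · have hne2 : ((Q i₀).comp f * Polynomial.X ^ i₀).coeff D ≠ 0 := by
        rw [hD, ← hterm i₀ hQi₀, Polynomial.coeff_natDegree]
        exact leadingCoeff_ne_zero.2
          (mul_ne_zero (aux_comp_ne_zero hdeg hQi₀) (pow_ne_zero _ Polynomial.X_ne_zero))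
      exact hne2 hcoeff
    · intro i hi hne
      by_cases hq : Q i = 0
      · simp [hq]
      apply Polynomial.coeff_eq_zero_of_natDegree_lt
      rw [hterm i hq]
      refine lt_of_le_of_ne (hmax i (Finset.mem_filter.2 ⟨hi, hq⟩)) (fun hEq => hne ?_)
      have emod : ∀ d j : ℕ, (d * n + j) % n = j % n := fun d j => by
        rw [Nat.add_comm, Nat.add_mul_mod_self_right]
      have h3 : ((Q i).natDegree * n + i) % n = ((Q i₀).natDegree * n + i₀) % n := by
        rw [hEq]
      rwa [emod, emod, Nat.mod_eq_of_lt (Finset.mem_range.1 hi),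
        Nat.mod_eq_of_lt (Finset.mem_range.1 hi₀r)] at h3
    · intro h; exact absurd hi₀r h
  intro i hi
  have hz : Polynomial.aeval fr (Q i) = 0 := by rw [hQ0 i hi, map_zero]
  rw [hQdef] at hz
  simp only [map_mul, map_prod] at hz
  rcases mul_eq_zero.1 hz with h | h
  · have hthis := hmul i
    rw [h] at hthis
    rcases mul_eq_zero.1 hthis with h' | h'
    · exact h'
    · exact absurd h' (hsne i)
  · obtain ⟨j, _, hj⟩ := Finset.prod_eq_zero_iff.1 h
    exact absurd hj (hsne j)

lemma aux_root_poly (f : Fq[X]) (hdeg : 0 < f.natDegree) (s : RatFunc Fq)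
    (hsf : Polynomial.aeval s f = algebraMap Fq[X] (RatFunc Fq) f) :
    ∃ p : Fq[X], algebraMap Fq[X] (RatFunc Fq) p = s := by
  classical
  set n := f.natDegree with hn
  set φ := algebraMap Fq[X] (RatFunc Fq) with hφ
  set p := s.num with hp
  set u := s.denom with hudef
  have hinj : Function.Injective φ := RatFunc.algebraMap_injective Fq
  have hu0 : φ u ≠ 0 := fun h => s.denom_ne_zero (hinj (by rw [h, map_zero]))
  have hsval : φ p / φ u = s := RatFunc.num_div_denom s
  have halg : ∀ a : Fq, algebraMap Fq (RatFunc Fq) a = φ (Polynomial.C a) := fun a => by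
    rw [IsScalarTower.algebraMap_apply Fq Fq[X] (RatFunc Fq), Polynomial.algebraMap_eq]
  have hkey : u ^ n * f = ∑ i ∈ Finset.range (n + 1),
      Polynomial.C (f.coeff i) * p ^ i * u ^ (n - i) := by
    apply hinj
    rw [map_mul, map_pow, map_sum]
    rw [← hsf]
    rw [Polynomial.aeval_eq_sum_range' (Nat.lt_succ_of_le (le_refl n))]
    rw [Finset.mul_sum]
    refine Finset.sum_congr rfl (fun i hi => ?_)
    have hile : i ≤ n := Nat.lt_succ_iff.1 (Finset.mem_range.1 hi)
    rw [map_mul, map_mul, map_pow, map_pow]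
    rw [Algebra.smul_def, halg]
    rw [← hsval, div_pow]
    have hsplit : φ u ^ n = φ u ^ i * φ u ^ (n - i) := by
      rw [← pow_add]
      congr 1
      omega
    field_simp
    rw [hsplit]
    ring
  have hudvd : u ∣ Polynomial.C (f.coeff n) * p ^ n := by
    have h1 : u ∣ u ^ n * f := dvd_mul_of_dvd_left (dvd_pow_self u (by omega)) f
    have h2 : u ∣ ∑ i ∈ Finset.range n, Polynomial.C (f.coeff i) * p ^ i * u ^ (n - i) := by
      refine Finset.dvd_sum (fun i hi => ?_)
      exact Dvd.dvd.mul_left (dvd_pow_self u (by have := Finset.mem_range.1 hi; omega)) _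
    have h3 := hkey
    rw [Finset.sum_range_succ, Nat.sub_self, pow_zero, mul_one] at h3
    have : Polynomial.C (f.coeff n) * p ^ n = u ^ n * f - ∑ i ∈ Finset.range n,
        Polynomial.C (f.coeff i) * p ^ i * u ^ (n - i) := by
      rw [h3]; ring
    rw [this]
    exact dvd_sub h1 h2
  have hcop : IsCoprime u (p ^ n) := (RatFunc.isCoprime_num_denom s).symm.pow_right
  have hClc : Polynomial.C (f.coeff n) ≠ 0 := by
    rw [Ne, Polynomial.C_eq_zero]
    exact Polynomial.leadingCoeff_ne_zero.2 (fun h0 => by rw [h0, Polynomial.natDegree_zero] at hn; omega)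
  have hudvdC : u ∣ Polynomial.C (f.coeff n) := hcop.dvd_of_dvd_mul_right hudvd
  have hudeg : u.natDegree = 0 := by
    have h5 := Polynomial.natDegree_le_of_dvd hudvdC hClc
    rw [Polynomial.natDegree_C] at h5
    omega
  have hu1 : u = 1 := (Polynomial.Monic.natDegree_eq_zero (RatFunc.monic_denom s)).1 hudeg
  refine ⟨p, ?_⟩
  have hφu : φ u = 1 := by rw [hu1, map_one]
  rw [← hsval, hφu, div_one]

lemma aux_exists_Pf (f : Fq[X]) (hdeg : 0 < f.natDegree)
    (hGal : IsGalois
      ↥(IntermediateField.adjoin Fq {algebraMap (Polynomial Fq) (RatFunc Fq) f})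
      (RatFunc Fq)) :
    ∃ Pf : Finset (Polynomial Fq), Pf.card = f.natDegree ∧
      (∀ p, p ∈ Pf ↔ f.comp p = f) ∧
      (∀ α β : Fq, f.eval β = f.eval α ↔ ∃ p ∈ Pf, p.eval α = β) := by
  classical
  haveI := hGal
  set n := f.natDegree with hn
  set L := RatFunc Fq with hL
  set φ := algebraMap Fq[X] L with hφ
  have hinj : Function.Injective φ := RatFunc.algebraMap_injective Fq
  set fr : L := φ f with hfr
  set K := IntermediateField.adjoin Fq {fr} with hK
  set t : K := ⟨fr, IntermediateField.mem_adjoin_simple_self Fq fr⟩ with ht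
  have hfne : f ≠ 0 := fun h0 => by rw [h0, Polynomial.natDegree_zero] at hn; omega
  have hlc : f.leadingCoeff ≠ 0 := Polynomial.leadingCoeff_ne_zero.2 hfne
  -- the polynomial g over K
  set g : Polynomial K := f.map (algebraMap Fq K) - Polynomial.C t with hg
  have halgKL : ∀ x : K, algebraMap K L x = (x : L) := fun x => rfl
  have hgmapL : g.map (algebraMap K L) = f.map (algebraMap Fq L) - Polynomial.C fr := by
    rw [hg, Polynomial.map_sub, Polynomial.map_map, Polynomial.map_C, halgKL,
      ← IsScalarTower.algebraMap_eq Fq K L]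
  have hgdeg : g.natDegree = n := by
    rw [hg, Polynomial.natDegree_sub_C, Polynomial.natDegree_map]
  have hgne : g ≠ 0 := fun h0 => by rw [h0, Polynomial.natDegree_zero] at hgdeg; omega
  have haevalXf : Polynomial.aeval RatFunc.X f = fr := by
    rw [← RatFunc.algebraMap_X, aux_aeval_phi, Polynomial.comp_X, hfr]
  have haevalg : Polynomial.aeval (RatFunc.X : L) g = 0 := by
    rw [hg]
    rw [map_sub]
    rw [Polynomial.aeval_map_algebraMap]
    rw [haevalXf]
    rw [Polynomial.aeval_C]
    rw [halgKL]
    simp [ht]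
  -- minpoly
  have hnormal : Normal K L := hGal.to_normal
  have hint : IsIntegral K (RatFunc.X : L) := Normal.isIntegral hnormal RatFunc.X
  set m := minpoly K (RatFunc.X : L) with hm
  have hmne : m ≠ 0 := minpoly.ne_zero hint
  have hmdvd : m ∣ g := minpoly.dvd K _ haevalg
  have hmdeg_le : m.natDegree ≤ n := hgdeg ▸ Polynomial.natDegree_le_of_dvd hmdvd hgne
  have hmdeg : m.natDegree = n := by
    rcases lt_or_eq_of_le hmdeg_le with hlt | heq
    · exfalso
      have hsum : ∑ i ∈ Finset.range n, ((m.coeff i : K) : L) * RatFunc.X ^ i = 0 := by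
        have := minpoly.aeval K (RatFunc.X : L)
        rw [← hm] at this
        rw [Polynomial.aeval_eq_sum_range' (n := n) (by omega)] at this
        rw [← this]
        refine Finset.sum_congr rfl (fun i _ => ?_)
        rw [Algebra.smul_def, halgKL]
      have hz := aux_indep f hdeg _ (fun i => (m.coeff i).2) hsum
      have h1 := hz m.natDegree (Finset.mem_range.2 hlt)
      have h2 : (m.coeff m.natDegree : K) = 0 := by exact_mod_cast h1
      rw [(minpoly.monic hint).coeff_natDegree] at h2
      exact one_ne_zero h2
    · exact heq
  obtain ⟨u, hu⟩ := hmdvd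
  have hune : u ≠ 0 := fun h0 => hgne (by rw [hu, h0, mul_zero])
  have hudeg : u.natDegree = 0 := by
    have h5 := Polynomial.natDegree_mul (minpoly.ne_zero hint) hune
    rw [← hu, hgdeg, hmdeg] at h5
    omega
  set c₀ := u.coeff 0 with hc₀def
  have huC : u = Polynomial.C c₀ := Polynomial.eq_C_of_natDegree_eq_zero hudeg
  have hc₀ne : c₀ ≠ 0 := fun h0 => hune (by rw [huC, h0, map_zero])
  have hglc : g.leadingCoeff = algebraMap Fq K f.leadingCoeff := by
    rw [Polynomial.leadingCoeff, hgdeg, hg, Polynomial.coeff_sub, Polynomial.coeff_map,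
      Polynomial.coeff_C, if_neg (by omega), sub_zero, Polynomial.leadingCoeff, hn]
  have hc₀val : c₀ = algebraMap Fq K f.leadingCoeff := by
    have h5 : g.leadingCoeff = m.leadingCoeff * u.leadingCoeff := by
      rw [hu, Polynomial.leadingCoeff_mul]
    rw [(minpoly.monic hint).leadingCoeff, one_mul, huC, Polynomial.leadingCoeff_C] at h5
    rw [← h5, hglc]
  set mL := m.map (algebraMap K L) with hmL
  have hmLne : mL ≠ 0 := Polynomial.map_ne_zero hmne
  have hsplit : Polynomial.Splits mL := hnormal.splits RatFunc.X
  set R := mL.roots with hR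
  have hRcard : Multiset.card R = n := by
    rw [hR, ← hsplit.natDegree_eq_card_roots, hmL, Polynomial.natDegree_map, hmdeg]
  haveI hsepa : Algebra.IsSeparable K L := hGal.to_isSeparable
  have hsep : m.Separable := Algebra.IsSeparable.isSeparable K (RatFunc.X : L)
  have hRnodup : R.Nodup := Polynomial.nodup_roots (Polynomial.Separable.map hsep)
  have hmLfact : mL = (R.map (fun a => Polynomial.X - Polynomial.C a)).prod :=
    hsplit.eq_prod_roots_of_monic ((minpoly.monic hint).map _)
  have hgLfact : f.map (algebraMap Fq L) - Polynomial.C fr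
      = mL * Polynomial.C ((algebraMap K L) c₀) := by
    rw [← hgmapL, hu, huC, Polynomial.map_mul, Polynomial.map_C, hmL, halgKL]
  have hEv : ∀ s : L, Polynomial.aeval s f - fr = mL.eval s * (algebraMap K L) c₀ := by
    intro s
    have h5 := congrArg (Polynomial.eval s) hgLfact
    rw [Polynomial.eval_sub, Polynomial.eval_C, Polynomial.eval_mul, Polynomial.eval_C] at h5
    rw [← h5, Polynomial.eval_map, ← Polynomial.aeval_def]
  have hc₀Lne : (algebraMap K L) c₀ ≠ 0 := fun h0 =>
    hc₀ne ((algebraMap K L).injective (by rw [h0, map_zero]))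
  have hRmem : ∀ s : L, s ∈ R ↔ Polynomial.aeval s f = fr := by
    intro s
    rw [hR, Polynomial.mem_roots hmLne, Polynomial.IsRoot]
    constructor
    · intro h5
      have h6 := hEv s
      rw [h5, zero_mul] at h6
      exact sub_eq_zero.1 h6
    · intro h5
      have h6 := hEv s
      rw [h5, sub_self] at h6
      exact (mul_eq_zero.1 h6.symm).resolve_right hc₀Lne
  have hRform : ∀ s ∈ R, ∃ p : Fq[X], φ p = s := fun s hs =>
    aux_root_poly f hdeg s ((hRmem s).1 hs)
  set ψ : L → Fq[X] := fun s => if h : ∃ p : Fq[X], φ p = s then h.choose else 0 with hψdef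
  have hψ1 : ∀ s ∈ R, φ (ψ s) = s := by
    intro s hs
    rw [hψdef]
    simp only
    rw [dif_pos (hRform s hs)]
    exact (hRform s hs).choose_spec
  have hψ2 : ∀ p : Fq[X], ψ (φ p) = p := by
    intro p
    have hex : ∃ q : Fq[X], φ q = φ p := ⟨p, rfl⟩
    rw [hψdef]
    simp only
    rw [dif_pos hex]
    exact hinj hex.choose_spec
  set P' := R.map ψ with hP'
  have hP'nodup : P'.Nodup :=
    hRnodup.map_on (fun a ha b hb hab => by rw [← hψ1 a ha, hab, hψ1 b hb])
  have hmemPf : ∀ p, p ∈ P'.toFinset ↔ f.comp p = f := by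
    intro p
    rw [Multiset.mem_toFinset, hP', Multiset.mem_map]
    constructor
    · rintro ⟨s, hs, rfl⟩
      have hφp : φ (ψ s) = s := hψ1 s hs
      have h5 : Polynomial.aeval (φ (ψ s)) f = fr := by
        rw [hφp]
        exact (hRmem s).1 hs
      rw [aux_aeval_phi] at h5
      exact hinj (by rw [h5, hfr])
    · intro hcomp
      have h5 : φ p ∈ R := (hRmem (φ p)).2 (by rw [aux_aeval_phi, hcomp, hfr])
      exact ⟨φ p, h5, hψ2 p⟩
  have hcleq : (algebraMap K L) c₀ = φ (Polynomial.C f.leadingCoeff) := by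
    rw [hc₀val, ← IsScalarTower.algebraMap_apply Fq K L,
      IsScalarTower.algebraMap_apply Fq Fq[X] L, Polynomial.algebraMap_eq]
  have hE0 : f.map (Polynomial.C : Fq →+* Fq[X]) - Polynomial.C f
      = Polynomial.C (Polynomial.C f.leadingCoeff)
        * (P'.map (fun p => Polynomial.X - Polynomial.C p)).prod := by
    apply Polynomial.map_injective φ hinj
    rw [Polynomial.map_sub, Polynomial.map_map, Polynomial.map_C, Polynomial.map_mul,
      Polynomial.map_C]
    have hφC : φ.comp (Polynomial.C : Fq →+* Fq[X]) = algebraMap Fq L :=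
      RingHom.ext (fun a => by
        rw [RingHom.comp_apply, ← Polynomial.algebraMap_eq, hφ,
          ← IsScalarTower.algebraMap_apply Fq Fq[X] L])
    rw [hφC]
    have hprod : Polynomial.map φ ((P'.map (fun p => Polynomial.X - Polynomial.C p)).prod)
        = (R.map (fun a => Polynomial.X - Polynomial.C a)).prod := by
      rw [Polynomial.map_multiset_prod, Multiset.map_map, hP', Multiset.map_map]
      exact congrArg Multiset.prod (Multiset.map_congr rfl (fun s hs => by
        simp only [Function.comp_apply, Polynomial.map_sub, Polynomial.map_X, Polynomial.map_C]
        rw [hψ1 s hs]))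
    rw [hprod, hgLfact, hmLfact, hcleq, mul_comm]
  have hfib : ∀ α β : Fq, f.eval β = f.eval α ↔ ∃ p ∈ P'.toFinset, p.eval α = β := by
    intro α β
    constructor
    · intro hev
      have h6 := congrArg (Polynomial.map (Polynomial.evalRingHom α)) hE0
      rw [Polynomial.map_sub, Polynomial.map_map, Polynomial.map_C, Polynomial.map_mul,
        Polynomial.map_C] at h6
      have hid : (Polynomial.evalRingHom α).comp (Polynomial.C : Fq →+* Fq[X])
          = RingHom.id Fq := RingHom.ext (fun a => by simp)
      rw [hid, Polynomial.map_id] at h6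
      rw [Polynomial.map_multiset_prod, Multiset.map_map] at h6
      have h7 := congrArg (Polynomial.eval β) h6
      rw [Polynomial.eval_sub, Polynomial.eval_C, Polynomial.eval_mul, Polynomial.eval_C,
        Polynomial.eval_multiset_prod, Multiset.map_map] at h7
      simp only [Function.comp_apply, Polynomial.map_sub, Polynomial.map_X, Polynomial.map_C,
        Polynomial.eval_sub, Polynomial.eval_X, Polynomial.eval_C,
        Polynomial.coe_evalRingHom] at h7
      rw [hev, sub_self] at h7
      have h8 : (P'.map (fun p => β - Polynomial.eval α p)).prod = 0 := by
        rcases mul_eq_zero.1 h7.symm with h | h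
        · exact absurd h hlc
        · exact h
      obtain ⟨p, hp, hval⟩ := Multiset.mem_map.1 (Multiset.prod_eq_zero_iff.1 h8)
      exact ⟨p, Multiset.mem_toFinset.2 hp, (sub_eq_zero.1 hval).symm⟩
    · rintro ⟨p, hp, rfl⟩
      have hcomp := (hmemPf p).1 hp
      rw [← Polynomial.eval_comp, hcomp]
  refine ⟨P'.toFinset, ?_, hmemPf, hfib⟩
  rw [Multiset.toFinset_card_of_nodup hP'nodup, hP', Multiset.card_map, hRcard]

end Stmt7Aux

/-- If `f ∈ F_q[x]` is non-constant and `F_q(x)/F_q(f(x))` is Galois, then `f` is a minimal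
value set polynomial: `#{f(α) : α ∈ F_q} = ⌊(q−1)/deg f⌋ + 1`. -/
theorem stmt_7 (Fq : Type*) [Field Fq] [Fintype Fq] [DecidableEq Fq]
    (f : Polynomial Fq) (hdeg : 0 < f.natDegree)
    (hGal : IsGalois
      ↥(IntermediateField.adjoin Fq {algebraMap (Polynomial Fq) (RatFunc Fq) f})
      (RatFunc Fq)) :
    (Finset.image (fun α => f.eval α) Finset.univ).card =
      (Fintype.card Fq - 1) / f.natDegree + 1 := by
  classical
  obtain ⟨Pf, hcard, hmem, hfib⟩ := aux_exists_Pf f hdeg hGal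
  set n := f.natDegree with hn
  set q := Fintype.card Fq with hq
  set V := Finset.image (fun α => f.eval α) Finset.univ with hV
  have hdeg1 : ∀ p ∈ Pf, p.natDegree = 1 := by
    intro p hp
    have h1 := (hmem p).1 hp
    have h2 : f.natDegree * p.natDegree = f.natDegree * 1 := by
      rw [mul_one, ← Polynomial.natDegree_comp, h1]
    exact Nat.eq_of_mul_eq_mul_left hdeg h2
  have hXmem : Polynomial.X ∈ Pf := (hmem Polynomial.X).2 Polynomial.comp_X
  have hcomp_mem : ∀ p ∈ Pf, ∀ p' ∈ Pf, p.comp p' ∈ Pf := by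
    intro p hp p' hp'
    refine (hmem _).2 ?_
    rw [← Polynomial.comp_assoc, (hmem p).1 hp, (hmem p').1 hp']
  have hpform : ∀ p ∈ Pf, p = Polynomial.C (p.coeff 1) * Polynomial.X + Polynomial.C (p.coeff 0) :=
    fun p hp => Polynomial.eq_X_add_C_of_natDegree_le_one (le_of_eq (hdeg1 p hp))
  have hane : ∀ p ∈ Pf, p.coeff 1 ≠ 0 := by
    intro p hp h0
    have h1 := hdeg1 p hp
    have hpne : p ≠ 0 := fun hz => by rw [hz, Polynomial.natDegree_zero] at h1; omega
    have h2 := Polynomial.leadingCoeff_ne_zero.2 hpne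
    rw [Polynomial.leadingCoeff, h1] at h2
    exact h2 h0
  have hinv : ∀ p ∈ Pf, ∃ s ∈ Pf, p.comp s = Polynomial.X ∧ s.comp p = Polynomial.X := by
    intro p hp
    set a := p.coeff 1 with hadef
    set b := p.coeff 0 with hbdef
    have ha := hane p hp
    set s : Fq[X] := Polynomial.C a⁻¹ * Polynomial.X + Polynomial.C (-(a⁻¹ * b)) with hs
    have h1 : p.comp s = Polynomial.X := by
      conv_lhs => rw [hpform p hp]
      simp only [Polynomial.add_comp, Polynomial.mul_comp, Polynomial.C_comp, Polynomial.X_comp,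
        hs]
      rw [mul_add, ← mul_assoc, ← Polynomial.C_mul, mul_inv_cancel₀ ha, Polynomial.C_1, one_mul,
        ← Polynomial.C_mul]
      have hab : a * -(a⁻¹ * b) = -b := by
        rw [mul_neg, ← mul_assoc, mul_inv_cancel₀ ha, one_mul]
      rw [hab, add_assoc, ← Polynomial.C_add, neg_add_cancel, Polynomial.C_0, add_zero]
    have h2 : s.comp p = Polynomial.X := by
      rw [hs]
      simp only [Polynomial.add_comp, Polynomial.mul_comp, Polynomial.C_comp, Polynomial.X_comp]
      conv_lhs => rw [hpform p hp]
      rw [mul_add, ← mul_assoc, ← Polynomial.C_mul, inv_mul_cancel₀ ha, Polynomial.C_1, one_mul,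
        ← Polynomial.C_mul, add_assoc, ← Polynomial.C_add, add_neg_cancel, Polynomial.C_0,
        add_zero]
    have hsmem : s ∈ Pf := by
      refine (hmem s).2 ?_
      conv_lhs => rw [← (hmem p).1 hp]
      rw [Polynomial.comp_assoc, h1, Polynomial.comp_X]
    exact ⟨s, hsmem, h1, h2⟩
  set orb : Fq → Finset Fq := fun α => Pf.image (fun p => p.eval α) with horb
  set stab : Fq → Finset Fq[X] := fun α => Pf.filter (fun p => p.eval α = α) with hstab
  have horb_mem : ∀ α β : Fq, β ∈ orb α ↔ f.eval β = f.eval α := by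
    intro α β
    rw [hfib α β, horb]
    simp
  have hos : ∀ α : Fq, (orb α).card * (stab α).card = n := by
    intro α
    have h1 : Pf.card = ∑ β ∈ orb α, (Pf.filter (fun p => p.eval α = β)).card :=
      Finset.card_eq_sum_card_fiberwise (fun p hp => Finset.mem_image.2 ⟨p, hp, rfl⟩)
    have h2 : ∀ β ∈ orb α, (Pf.filter (fun p => p.eval α = β)).card = (stab α).card := by
      intro β hβ
      obtain ⟨p₀, hp₀, hp₀v⟩ := Finset.mem_image.1 hβ
      obtain ⟨s₀, hs₀, hps, hsp⟩ := hinv p₀ hp₀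
      refine (Finset.card_bij (fun s _ => p₀.comp s) ?_ ?_ ?_).symm
      · intro s hsm
        obtain ⟨hsPf, hsev⟩ := Finset.mem_filter.1 hsm
        refine Finset.mem_filter.2 ⟨hcomp_mem p₀ hp₀ s hsPf, ?_⟩
        rw [Polynomial.eval_comp, hsev, hp₀v]
      · intro s hsm s' hsm' hEq
        have h3 := congrArg (fun w => s₀.comp w) hEq
        rwa [← Polynomial.comp_assoc, ← Polynomial.comp_assoc, hsp, Polynomial.X_comp,
          Polynomial.X_comp] at h3
      · intro p₁ hp₁
        obtain ⟨hp₁Pf, hp₁ev⟩ := Finset.mem_filter.1 hp₁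
        refine ⟨s₀.comp p₁, Finset.mem_filter.2 ⟨hcomp_mem s₀ hs₀ p₁ hp₁Pf, ?_⟩, ?_⟩
        · rw [Polynomial.eval_comp, hp₁ev, ← hp₀v, ← Polynomial.eval_comp, hsp,
            Polynomial.eval_X]
        · show p₀.comp (s₀.comp p₁) = p₁
          rw [← Polynomial.comp_assoc, hps, Polynomial.X_comp]
    rw [Finset.sum_congr rfl h2, Finset.sum_const, smul_eq_mul] at h1
    rw [← h1, hcard]
  have horb_self : ∀ α : Fq, α ∈ orb α := fun α => (horb_mem α α).2 rfl
  have horb_pos : ∀ α : Fq, 0 < (orb α).card := fun α => Finset.card_pos.2 ⟨α, horb_self α⟩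
  have hsum1 : ∑ α : Fq, (stab α).card = n * V.card := by
    have h1 : ∀ x ∈ Finset.univ, f.eval x ∈ V := fun x _ =>
      Finset.mem_image.2 ⟨x, Finset.mem_univ x, rfl⟩
    rw [← Finset.sum_fiberwise_of_maps_to h1 (fun α => (stab α).card)]
    have h2 : ∀ v ∈ V, ∑ α ∈ Finset.univ.filter (fun α => f.eval α = v), (stab α).card = n := by
      intro v hv
      obtain ⟨α₀, _, hα₀⟩ := Finset.mem_image.1 hv
      have hfilt : Finset.univ.filter (fun α => f.eval α = v) = orb α₀ := by
        ext β
        rw [Finset.mem_filter, horb_mem α₀ β, hα₀]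
        simp
      have hstabeq : ∀ α ∈ orb α₀, (stab α).card = (stab α₀).card := by
        intro α hα
        have hfe : f.eval α = f.eval α₀ := (horb_mem α₀ α).1 hα
        have horbeq : orb α = orb α₀ := by
          ext β
          rw [horb_mem α β, horb_mem α₀ β, hfe]
        have h3 := hos α
        rw [horbeq] at h3
        have h4 := hos α₀
        exact Nat.eq_of_mul_eq_mul_left (horb_pos α₀) (by rw [h3, h4])
      rw [hfilt, Finset.sum_congr rfl hstabeq, Finset.sum_const, smul_eq_mul, hos α₀]
    rw [Finset.sum_congr rfl h2, Finset.sum_const, smul_eq_mul, mul_comm]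
  have hsum2 : ∑ α : Fq, (stab α).card
      = ∑ p ∈ Pf, (Finset.univ.filter (fun α => p.eval α = α)).card := by
    simp only [hstab, Finset.card_filter]
    rw [Finset.sum_comm]
  set d := (Pf.filter (fun p => p.coeff 1 = 1)).card with hd
  have hfix : ∑ p ∈ Pf, (Finset.univ.filter (fun α => p.eval α = α)).card = q + (n - d) := by
    rw [← Finset.sum_filter_add_sum_filter_not Pf (fun p => p.coeff 1 = 1)]
    have hXin : Polynomial.X ∈ Pf.filter (fun p => p.coeff 1 = 1) :=
      Finset.mem_filter.2 ⟨hXmem, Polynomial.coeff_X_one⟩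
    have hA : ∑ p ∈ Pf.filter (fun p => p.coeff 1 = 1),
        (Finset.univ.filter (fun α => p.eval α = α)).card
        = (Finset.univ.filter (fun α => (Polynomial.X : Fq[X]).eval α = α)).card := by
      refine Finset.sum_eq_single_of_mem _ hXin ?_
      intro p hp hpne
      obtain ⟨hpPf, hp1⟩ := Finset.mem_filter.1 hp
      rw [Finset.card_eq_zero, Finset.filter_eq_empty_iff]
      intro α _
      intro hev
      apply hpne
      have hform := hpform p hpPf
      rw [hp1, Polynomial.C_1, one_mul] at hform
      have hevform : p.eval α = α + p.coeff 0 := by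
        conv_lhs => rw [hform]
        simp
      have hb0 : p.coeff 0 = 0 := by
        rw [hevform] at hev
        exact add_eq_left.1 hev
      rw [hform, hb0, Polynomial.C_0, add_zero]
    have hA2 : (Finset.univ.filter (fun α => (Polynomial.X : Fq[X]).eval α = α)).card = q := by
      simp [hq]
    have hB : ∑ p ∈ Pf.filter (fun p => ¬ p.coeff 1 = 1),
        (Finset.univ.filter (fun α => p.eval α = α)).card = n - d := by
      have h1 : ∀ p ∈ Pf.filter (fun p => ¬ p.coeff 1 = 1),
          (Finset.univ.filter (fun α => p.eval α = α)).card = 1 := by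
        intro p hp
        obtain ⟨hpPf, hp1⟩ := Finset.mem_filter.1 hp
        set a := p.coeff 1 with hadef
        set b := p.coeff 0 with hbdef
        have ha1 : (1 : Fq) - a ≠ 0 := sub_ne_zero.2 (fun h => hp1 h.symm)
        have hevform : ∀ γ : Fq, p.eval γ = a * γ + b := by
          intro γ
          conv_lhs => rw [hpform p hpPf]
          simp
          rfl
        rw [Finset.card_eq_one]
        refine ⟨(1 - a)⁻¹ * b, ?_⟩
        ext γ
        rw [Finset.mem_filter, Finset.mem_singleton, hevform γ]
        constructor
        · rintro ⟨_, hevγ⟩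
          have hbe : b = (1 - a) * γ := by linear_combination hevγ
          rw [hbe, inv_mul_cancel_left₀ ha1]
        · intro hγ
          refine ⟨Finset.mem_univ _, ?_⟩
          rw [hγ]
          field_simp
          ring
      rw [Finset.sum_congr rfl h1, Finset.sum_const, smul_eq_mul, mul_one]
      have h2 := Finset.card_filter_add_card_filter_not
        (s := Pf) (p := fun p => p.coeff 1 = 1)
      rw [hcard] at h2
      omega
    rw [hA, hA2, hB]
  have hd1 : 1 ≤ d := Finset.card_pos.2 ⟨Polynomial.X,
    Finset.mem_filter.2 ⟨hXmem, Polynomial.coeff_X_one⟩⟩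
  have hdn : d ≤ n := hcard ▸ Finset.card_filter_le Pf _
  have hV1 : 1 ≤ V.card := Finset.card_pos.2 ⟨f.eval (Classical.arbitrary Fq),
    Finset.mem_image.2 ⟨Classical.arbitrary Fq, Finset.mem_univ _, rfl⟩⟩
  have hmain : n * V.card = q + (n - d) := by rw [← hsum1, hsum2, hfix]
  obtain ⟨k, hk⟩ := Nat.exists_eq_add_of_le hV1
  rw [hk, mul_add, mul_one] at hmain
  have hq1 : q - 1 = n * k + (d - 1) := by
    generalize n * k = M at hmain ⊢
    omega
  rw [hk, hq1, Nat.mul_add_div (by omega), Nat.div_eq_of_lt (by omega)]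
  omega
end

section
/- Let f ∈ F_q[x] be a minimal value set polynomial with value set V' = { f(α) : α ∈ F_q }, where #V' > 2 or #V' = 2 = char(F_q). Let T(x) = ∏_{γ ∈ V'} (x − γ). Then there exists θ ∈ F_q* such that T(f(x)) = θ (x^q − x) f'(x) in F_q[x], where f' is the formal derivative of f. -/
open Polynomial Finset

private lemma eval_derivative_prod_X_sub_C {K : Type*} [Field K] [DecidableEq K]
    (S : Finset K) {γ : K} (hγ : γ ∈ S) :
    (Polynomial.derivative (∏ c ∈ S, (X - C c))).eval γ = ∏ c ∈ S.erase γ, (γ - c) := by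
  have hsplit : ∏ c ∈ S, (X - C c) = (X - C γ) * ∏ c ∈ S.erase γ, (X - C c) :=
    (Finset.mul_prod_erase S (fun c => X - C c) hγ).symm
  rw [hsplit, derivative_mul]
  simp [eval_prod]

/-- Borges' characterization: let `f ∈ F_q[x]` be a minimal value set polynomial with value set
`V'`, where `#V' > 2` or `#V' = 2 = char F_q`.  Let `T(x) = ∏_{γ ∈ V'} (x − γ)`.  Then there is
`θ ∈ F_q*` with `T(f(x)) = θ (x^q − x) f'(x)`. -/
theorem stmt_8 (Fq : Type*) [Field Fq] [Fintype Fq] [DecidableEq Fq]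
    (f : Polynomial Fq) (hdeg : 0 < f.natDegree)
    (V : Finset Fq) (hV : V = Finset.image (fun α => f.eval α) Finset.univ)
    (hmin : V.card = (Fintype.card Fq - 1) / f.natDegree + 1)
    (hbig : 2 < V.card ∨ (V.card = 2 ∧ ringChar Fq = 2))
    (T : Polynomial Fq) (hT : T = ∏ γ ∈ V, (Polynomial.X - Polynomial.C γ)) :
    ∃ θ : Fq, θ ≠ 0 ∧
      T.comp f = Polynomial.C θ * (Polynomial.X ^ Fintype.card Fq - Polynomial.X) *
        Polynomial.derivative f := by
  classical
  set q : ℕ := Fintype.card Fq with hqdef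
  set n : ℕ := f.natDegree with hndef
  set m : ℕ := V.card with hmdef
  have hq2 : 2 ≤ q := Fintype.one_lt_card
  have hn1 : 1 ≤ n := hdeg
  have hm2 : 2 ≤ m := by rcases hbig with hb | ⟨hb, _⟩ <;> omega
  have hfC : ∀ c : Fq, f ≠ C c := by
    intro c hc
    have : n = 0 := by rw [hndef, hc, natDegree_C]
    omega
  have hf0 : f ≠ 0 := by
    intro hc
    have : n = 0 := by rw [hndef, hc, natDegree_zero]
    omega
  have hmem : ∀ α : Fq, f.eval α ∈ V := fun α =>
    hV ▸ Finset.mem_image_of_mem _ (Finset.mem_univ α)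
  have hcompne : ∀ p : Polynomial Fq, p ≠ 0 → p.comp f ≠ 0 := by
    intro p hp hc
    rcases Polynomial.comp_eq_zero_iff.mp hc with h0 | ⟨_, hfc⟩
    · exact hp h0
    · exact hfC _ hfc
  -- facts about T
  have hTmonic : T.Monic := by
    rw [hT]; exact monic_prod_of_monic _ _ fun γ _ => monic_X_sub_C γ
  have hTdeg : T.natDegree = m := by
    rw [hT, natDegree_prod _ _ fun γ _ => X_sub_C_ne_zero γ]
    simp [natDegree_X_sub_C]
    exact hmdef.symm
  have hTevalV : ∀ γ ∈ V, T.eval γ = 0 := by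
    intro γ hγ
    rw [hT, eval_prod]
    exact Finset.prod_eq_zero hγ (by simp)
  have hTcompne : T.comp f ≠ 0 := hcompne T hTmonic.ne_zero
  have hTcomp_deg : (T.comp f).natDegree = m * n := by rw [natDegree_comp, hTdeg]
  -- facts about X^q - X
  have hXdeg : ((X : Polynomial Fq) ^ q - X).natDegree = q :=
    FiniteField.X_pow_card_sub_X_natDegree_eq Fq Fintype.one_lt_card
  have hXne : ((X : Polynomial Fq) ^ q - X) ≠ 0 :=
    FiniteField.X_pow_card_sub_X_ne_zero Fq Fintype.one_lt_card
  have hXlc : ((X : Polynomial Fq) ^ q - X).leadingCoeff = 1 := by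
    rw [Polynomial.leadingCoeff, hXdeg, coeff_sub, coeff_X_pow, coeff_X]
    have : ¬(1 = q) := by omega
    simp [this]
  have hXprod : ∏ c : Fq, (X - C c) = (X : Polynomial Fq) ^ q - X := by
    apply eq_of_dvd_of_natDegree_le_of_leadingCoeff
    · apply Finset.prod_dvd_of_coprime
      · intro a _ b hb hab
        exact pairwise_coprime_X_sub_C Function.injective_id hab
      · intro c _
        rw [dvd_iff_isRoot]
        simp [IsRoot, hqdef, FiniteField.pow_card, sub_eq_zero]
    · rw [hXdeg, natDegree_prod _ _ fun c _ => X_sub_C_ne_zero c]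
      simp [natDegree_X_sub_C, Finset.card_univ, hqdef]
    · rw [(monic_prod_of_monic _ _ fun c _ => monic_X_sub_C c).leadingCoeff, hXlc]
  -- divisibility : X^q - X ∣ T ∘ f, get g
  have hdvd : ((X : Polynomial Fq) ^ q - X) ∣ T.comp f := by
    rw [← hXprod]
    apply Finset.prod_dvd_of_coprime
    · intro a _ b hb hab
      exact pairwise_coprime_X_sub_C Function.injective_id hab
    · intro α _
      rw [dvd_iff_isRoot, IsRoot, eval_comp]
      exact hTevalV _ (hmem α)
  obtain ⟨g, hg⟩ := hdvd
  have hgne : g ≠ 0 := by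
    rintro rfl; rw [mul_zero] at hg; exact hTcompne hg
  have hgdeg0 : q + g.natDegree = m * n := by
    rw [← hTcomp_deg, hg, natDegree_mul hXne hgne, hXdeg]
  have hmn : m * n ≤ q - 1 + n := by
    rw [hmin, add_mul, one_mul]
    exact Nat.add_le_add_right (Nat.div_mul_le_self _ _) n
  have hgdeg : g.natDegree ≤ n - 1 := by omega
  -- the complementary product W
  set W : Polynomial Fq := ∏ c ∈ Finset.univ \ V, (f - C c) with hWdef
  have hTcompprod : T.comp f = ∏ γ ∈ V, (f - C γ) := by
    rw [hT, Polynomial.prod_comp]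
    simp [sub_comp]
  have hprod_univ : ∏ c : Fq, (f - C c) = f ^ q - f := by
    have h1 : ∏ c : Fq, (f - C c) = (∏ c : Fq, (X - C c)).comp f := by
      rw [Polynomial.prod_comp]; simp [sub_comp]
    rw [h1, hXprod]
    simp [sub_comp, pow_comp]
  have hTW : T.comp f * W = f ^ q - f := by
    rw [← hprod_univ, ← Finset.prod_sdiff (Finset.subset_univ V), hTcompprod, hWdef]
    ring
  have hE3 : ((X : Polynomial Fq) ^ q - X) * (g * W) = f ^ q - f := by
    rw [← hTW, hg]; ring
  have hcast : ((q : Fq)) = 0 := Nat.cast_card_eq_zero Fq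
  have hE4 : derivative f = g * W - ((X : Polynomial Fq) ^ q - X) * derivative (g * W) := by
    have hd := congrArg derivative hE3
    rw [derivative_mul] at hd
    simp only [derivative_sub, derivative_pow, derivative_X, hcast, map_zero, zero_mul, mul_one,
      zero_sub, sub_zero, neg_mul, one_mul] at hd
    linear_combination hd
  have hE5 : ∀ α : Fq, (derivative f).eval α = g.eval α * W.eval α := by
    intro α
    have hev := congrArg (eval α) hE4
    simpa [hqdef, FiniteField.pow_card] using hev
  have hWne : ∀ α : Fq, W.eval α ≠ 0 := by
    intro α
    rw [hWdef, eval_prod]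
    apply Finset.prod_ne_zero_iff.mpr
    intro c hc
    simp only [eval_sub, eval_C, ne_eq, sub_eq_zero]
    intro h0
    rcases Finset.mem_sdiff.mp hc with ⟨_, hcV⟩
    exact hcV (h0 ▸ hmem α)
  -- the key evaluation: T'(f(α)) * W(α) = -1
  have hE9 : ∀ α : Fq, (derivative T).eval (f.eval α) * W.eval α = -1 := by
    intro α
    have hγV : f.eval α ∈ V := hmem α
    have h1 : (derivative T).eval (f.eval α) = ∏ c ∈ V.erase (f.eval α), (f.eval α - c) := by
      rw [hT]; exact eval_derivative_prod_X_sub_C V hγV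
    have h2 : W.eval α = ∏ c ∈ Finset.univ \ V, (f.eval α - c) := by
      rw [hWdef, eval_prod]; simp
    have hdisj : Disjoint (V.erase (f.eval α)) (Finset.univ \ V) := by
      apply Finset.disjoint_left.mpr
      intro c hc hc'
      exact (Finset.mem_sdiff.mp hc').2 (Finset.mem_of_mem_erase hc)
    have hunion : (V.erase (f.eval α)) ∪ (Finset.univ \ V) = Finset.univ.erase (f.eval α) := by
      ext c
      simp only [Finset.mem_union, Finset.mem_erase, Finset.mem_sdiff, Finset.mem_univ, true_and]
      by_cases hcV : c ∈ V
      · by_cases hce : c = f.eval α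
        · subst hce; simp [hγV]
        · simp [hcV, hce]
      · have hce : c ≠ f.eval α := fun hx => hcV (hx ▸ hγV)
        simp [hcV, hce]
    have h3 : (derivative T).eval (f.eval α) * W.eval α
        = ∏ c ∈ Finset.univ.erase (f.eval α), (f.eval α - c) := by
      rw [h1, h2, ← Finset.prod_union hdisj, hunion]
    have h4 : ∏ c ∈ Finset.univ.erase (f.eval α), (f.eval α - c)
        = (derivative ((X : Polynomial Fq) ^ q - X)).eval (f.eval α) := by
      rw [← hXprod, eval_derivative_prod_X_sub_C Finset.univ (Finset.mem_univ (f.eval α))]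
    have h5 : (derivative ((X : Polynomial Fq) ^ q - X)).eval (f.eval α) = -1 := by
      simp [derivative_pow, hcast]
    rw [h3, h4, h5]
  -- construction of the auxiliary polynomial k
  obtain ⟨k, hk0, hkdeg, hRdeg⟩ :
      ∃ k : Polynomial Fq, k ≠ 0 ∧ k.natDegree ≤ m - 2 ∧
        ((k * derivative T) %ₘ T).natDegree ≤ m - 2 := by
    have key : ∀ p : Polynomial Fq, (p %ₘ T).coeff (m - 1) = 0 → (p %ₘ T).natDegree ≤ m - 2 := by
      intro p hp
      by_cases h0 : p %ₘ T = 0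
      · simp [h0]
      · have hlt : (p %ₘ T).degree < T.degree := degree_modByMonic_lt p hTmonic
        have hlt' : (p %ₘ T).natDegree < m := by
          rw [← hTdeg]
          exact natDegree_lt_natDegree h0 hlt
        have hne : (p %ₘ T).natDegree ≠ m - 1 := by
          intro he
          have hlc := Polynomial.leadingCoeff_ne_zero.mpr h0
          rw [Polynomial.leadingCoeff, he] at hlc
          exact hlc hp
        omega
    rcases hbig with hb3 | ⟨hb2, hchar2⟩
    · -- case m ≥ 3
      have hm3 : 3 ≤ m := hb3
      set u : Fq := ((X * derivative T) %ₘ T).coeff (m - 1) with hu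
      set v : Fq := ((derivative T) %ₘ T).coeff (m - 1) with hv
      by_cases huv : u = 0 ∧ v = 0
      · refine ⟨1, one_ne_zero, by simp, ?_⟩
        apply key
        rw [one_mul]
        exact huv.2
      · refine ⟨C v * X - C u, ?_, ?_, ?_⟩
        · intro h0
          apply huv
          constructor
          · have hc0 := congrArg (fun p => Polynomial.coeff p 0) h0
            simpa using hc0
          · have hc1 := congrArg (fun p => Polynomial.coeff p 1) h0
            simpa using hc1
        · refine le_trans (natDegree_sub_le _ _) ?_
          have h1 : (C v * X : Polynomial Fq).natDegree ≤ 1 := by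
            refine le_trans (natDegree_mul_le) ?_
            simp
          have h2 : (C u : Polynomial Fq).natDegree = 0 := natDegree_C u
          have : (1 : ℕ) ≤ m - 2 := by omega
          omega
        · apply key
          have hexp : (C v * X - C u) * derivative T
              = v • (X * derivative T) - u • (derivative T) := by
            simp only [smul_eq_C_mul]
            ring
          rw [hexp, sub_modByMonic, smul_modByMonic, smul_modByMonic]
          simp only [coeff_sub, coeff_smul, smul_eq_mul, ← hu, ← hv]
          ring
    · -- case m = 2 and char Fq = 2
      have h2z : (2 : Fq) = 0 := by
        haveI : CharP Fq (ringChar Fq) := ringChar.charP Fq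
        rw [hchar2] at this
        exact_mod_cast (CharP.cast_eq_zero Fq 2)
      refine ⟨1, one_ne_zero, by simp, ?_⟩
      apply key
      rw [one_mul]
      have hTd : derivative T %ₘ T = derivative T := by
        rw [Polynomial.modByMonic_eq_self_iff hTmonic]
        exact degree_derivative_lt hTmonic.ne_zero
      have hm1 : m - 1 = 1 := by omega
      rw [hTd, hm1, Polynomial.coeff_derivative]
      have : ((1 : ℕ) : Fq) + 1 = 0 := by
        norm_num
        exact h2z
      rw [this, mul_zero]
  set R : Polynomial Fq := (k * derivative T) %ₘ T with hRdef
  have hRevalV : ∀ γ ∈ V, R.eval γ = k.eval γ * (derivative T).eval γ := by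
    intro γ hγ
    rw [hRdef, Polynomial.modByMonic_eq_sub_mul_div _ T]
    simp [hTevalV γ hγ]
  -- the central identity : k(f)·g + R(f)·f' = 0
  have harith : (m - 2) * n + (n - 1) < q := by
    have h2n : 2 * n ≤ m * n := Nat.mul_le_mul_right n hm2
    have hsub : (m - 2) * n = m * n - 2 * n := Nat.sub_mul m 2 n
    omega
  have hfd_deg : (derivative f).natDegree ≤ n - 1 := natDegree_derivative_le f
  have hZ : k.comp f * g + R.comp f * derivative f = 0 := by
    apply Polynomial.eq_zero_of_natDegree_lt_card_of_eval_eq_zero' _ Finset.univ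
    · intro α _
      simp only [eval_add, eval_mul, eval_comp]
      rw [hRevalV _ (hmem α), hE5 α]
      linear_combination (k.eval (f.eval α) * g.eval α) * hE9 α
    · rw [Finset.card_univ, ← hqdef]
      have hb1 : (k.comp f * g).natDegree ≤ (m - 2) * n + (n - 1) := by
        refine le_trans natDegree_mul_le ?_
        have : (k.comp f).natDegree ≤ (m - 2) * n := by
          rw [natDegree_comp]
          exact Nat.mul_le_mul_right n hkdeg
        omega
      have hb2 : (R.comp f * derivative f).natDegree ≤ (m - 2) * n + (n - 1) := by
        refine le_trans natDegree_mul_le ?_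
        have : (R.comp f).natDegree ≤ (m - 2) * n := by
          rw [natDegree_comp]
          exact Nat.mul_le_mul_right n hRdeg
        omega
      have := natDegree_add_le (k.comp f * g) (R.comp f * derivative f)
      omega
  -- derivative of f is nonzero
  have hfd0 : derivative f ≠ 0 := by
    intro h0
    rw [h0, mul_zero, add_zero] at hZ
    rcases mul_eq_zero.mp hZ with hk | hgg
    · exact hcompne k hk0 hk
    · exact hgne hgg
  -- gcd cancellation
  set D : Polynomial Fq := EuclideanDomain.gcd k R with hDdef
  have hDne : D ≠ 0 := by
    intro h0
    exact hk0 ((EuclideanDomain.gcd_eq_zero_iff.mp h0).1)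
  obtain ⟨k₁, hk₁⟩ := EuclideanDomain.gcd_dvd_left k R
  obtain ⟨R₁, hR₁⟩ := EuclideanDomain.gcd_dvd_right k R
  rw [← hDdef] at hk₁ hR₁
  have hk₁ne : k₁ ≠ 0 := by
    rintro rfl; rw [mul_zero] at hk₁; exact hk0 hk₁
  have hbez : IsCoprime k₁ R₁ := by
    refine ⟨EuclideanDomain.gcdA k R, EuclideanDomain.gcdB k R, ?_⟩
    apply mul_left_cancel₀ hDne
    rw [mul_one]
    have hb := EuclideanDomain.gcd_eq_gcd_ab k R
    rw [← hDdef] at hb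
    linear_combination (-(EuclideanDomain.gcdA k R)) * hk₁
      - (EuclideanDomain.gcdB k R) * hR₁ - hb
  have hDfne : D.comp f ≠ 0 := hcompne D hDne
  have hkc : k.comp f = D.comp f * k₁.comp f := by rw [hk₁, mul_comp]
  have hRc : R.comp f = D.comp f * R₁.comp f := by
    conv_lhs => rw [hR₁]
    rw [mul_comp]
  have hZ1 : k₁.comp f * g + R₁.comp f * derivative f = 0 := by
    apply mul_left_cancel₀ hDfne
    rw [mul_zero]
    linear_combination hZ - g * hkc - derivative f * hRc
  have hcopf : IsCoprime (k₁.comp f) (R₁.comp f) := by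
    obtain ⟨a, b, hab⟩ := hbez
    refine ⟨a.comp f, b.comp f, ?_⟩
    have := congrArg (fun p => Polynomial.comp p f) hab
    simpa [add_comp, mul_comp, one_comp] using this
  have hdvd1 : k₁.comp f ∣ derivative f := by
    have hdd : k₁.comp f ∣ R₁.comp f * derivative f :=
      ⟨-g, by linear_combination hZ1⟩
    exact hcopf.dvd_of_dvd_mul_left hdd
  have hk₁deg : k₁.natDegree = 0 := by
    by_contra hne
    have h1 : n ≤ (k₁.comp f).natDegree := by
      rw [natDegree_comp]
      have : 1 ≤ k₁.natDegree := Nat.pos_of_ne_zero hne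
      calc n = 1 * n := (one_mul n).symm
        _ ≤ k₁.natDegree * n := Nat.mul_le_mul_right n this
    have h2 := Polynomial.natDegree_le_of_dvd hdvd1 hfd0
    omega
  have hdvd2 : R₁.comp f ∣ g := by
    have hdd : R₁.comp f ∣ k₁.comp f * g :=
      ⟨-(derivative f), by linear_combination hZ1⟩
    exact hcopf.symm.dvd_of_dvd_mul_left hdd
  have hR₁ne : R₁ ≠ 0 := by
    rintro rfl
    rw [zero_comp, zero_mul, add_zero] at hZ1
    rcases mul_eq_zero.mp hZ1 with hk | hgg
    · exact hcompne k₁ hk₁ne hk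
    · exact hgne hgg
  have hR₁deg : R₁.natDegree = 0 := by
    by_contra hne
    have h1 : n ≤ (R₁.comp f).natDegree := by
      rw [natDegree_comp]
      have : 1 ≤ R₁.natDegree := Nat.pos_of_ne_zero hne
      calc n = 1 * n := (one_mul n).symm
        _ ≤ R₁.natDegree * n := Nat.mul_le_mul_right n this
    have h2 := Polynomial.natDegree_le_of_dvd hdvd2 hgne
    omega
  obtain ⟨κ, hκ⟩ : ∃ c, k₁ = C c := ⟨k₁.coeff 0, Polynomial.eq_C_of_natDegree_eq_zero hk₁deg⟩
  obtain ⟨ρ, hρ⟩ : ∃ c, R₁ = C c := ⟨R₁.coeff 0, Polynomial.eq_C_of_natDegree_eq_zero hR₁deg⟩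
  have hκ0 : κ ≠ 0 := fun h => hk₁ne (by rw [hκ, h, map_zero])
  have hρ0 : ρ ≠ 0 := fun h => hR₁ne (by rw [hρ, h, map_zero])
  have hfinal : C κ * g + C ρ * derivative f = 0 := by
    rw [hκ, hρ] at hZ1
    simpa [C_comp] using hZ1
  refine ⟨-(ρ / κ), ?_, ?_⟩
  · simp [neg_eq_zero, _root_.div_eq_zero_iff, hρ0, hκ0]
  · have hCκ : (C κ : Polynomial Fq) ≠ 0 := by simpa using hκ0
    have hgf : g = C (-(ρ / κ)) * derivative f := by
      apply mul_left_cancel₀ hCκ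
      have hstep : C κ * (C (-(ρ / κ)) * derivative f) = C (-ρ) * derivative f := by
        have hx : κ * -(ρ / κ) = -ρ := by field_simp
        rw [← mul_assoc, ← C_mul, hx]
      rw [hstep]
      have : (C (-ρ) : Polynomial Fq) = -C ρ := by simp
      rw [this]
      linear_combination hfinal
    rw [hg, hgf]
    ring
end

section
/- Let f₁, f₂ ∈ F_q[x] be polynomials admitting θ₁, θ₂ ∈ F_q* and a common monic polynomial T ∈ F_q[x] with T(f₁(x)) = θ₁ (x^q − x) f₁'(x) and T(f₂(y)) = θ₂ (y^q − y) f₂'(y), and suppose θ₁ = θ₂. Then the polynomial F(x, y) = f₁(x) − f₂(y) divides (x^q − x) ∂F/∂x + (y^q − y) ∂F/∂y in F_q[x, y]. -/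
open MvPolynomial

/-- If `f₁, f₂ ∈ F_q[x]` admit `θ₁, θ₂ ∈ F_q*` and a common monic `T` with
`T(fᵢ) = θᵢ (x^q − x) fᵢ'` and `θ₁ = θ₂`, then `F(x,y) = f₁(x) − f₂(y)` divides
`(x^q − x) F_x + (y^q − y) F_y` in `F_q[x,y]`. -/
theorem stmt_9 (Fq : Type*) [Field Fq] [Fintype Fq]
    (f₁ f₂ T : Polynomial Fq) (θ₁ θ₂ : Fq) (hθ₁ : θ₁ ≠ 0) (hθ₂ : θ₂ ≠ 0)
    (hTmonic : T.Monic)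
    (hT₁ : T.comp f₁ = Polynomial.C θ₁ * (Polynomial.X ^ Fintype.card Fq - Polynomial.X) *
      Polynomial.derivative f₁)
    (hT₂ : T.comp f₂ = Polynomial.C θ₂ * (Polynomial.X ^ Fintype.card Fq - Polynomial.X) *
      Polynomial.derivative f₂)
    (hθ : θ₁ = θ₂)
    (F : MvPolynomial (Fin 2) Fq)
    (hF : F = Polynomial.aeval (X 0) f₁ - Polynomial.aeval (X 1) f₂) :
    F ∣ (X 0 ^ Fintype.card Fq - X 0) * pderiv 0 F +
      (X 1 ^ Fintype.card Fq - X 1) * pderiv 1 F := by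
  subst hθ
  set q := Fintype.card Fq
  set a : MvPolynomial (Fin 2) Fq := Polynomial.aeval (X 0) f₁ with ha
  set b : MvPolynomial (Fin 2) Fq := Polynomial.aeval (X 1) f₂ with hb
  -- partial derivatives
  have hd0 : pderiv (0 : Fin 2) F = Polynomial.aeval (X 0) (Polynomial.derivative f₁) := by
    rw [hF, map_sub, Derivation.comp_aeval_eq, Derivation.comp_aeval_eq]
    simp
  have hd1 : pderiv (1 : Fin 2) F = -Polynomial.aeval (X 1) (Polynomial.derivative f₂) := by
    rw [hF, map_sub, Derivation.comp_aeval_eq, Derivation.comp_aeval_eq]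
    simp
  -- evaluate hT₁, hT₂
  have e1 : Polynomial.aeval a T =
      C θ₁ * (X 0 ^ q - X 0) * Polynomial.aeval (X 0) (Polynomial.derivative f₁) := by
    have := congrArg (Polynomial.aeval (X 0 : MvPolynomial (Fin 2) Fq)) hT₁
    rw [Polynomial.aeval_comp] at this
    simpa [ha] using this
  have e2 : Polynomial.aeval b T =
      C θ₁ * (X 1 ^ q - X 1) * Polynomial.aeval (X 1) (Polynomial.derivative f₂) := by
    have := congrArg (Polynomial.aeval (X 1 : MvPolynomial (Fin 2) Fq)) hT₂
    rw [Polynomial.aeval_comp] at this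
    simpa [hb] using this
  have hdvd : a - b ∣ Polynomial.aeval a T - Polynomial.aeval b T := by
    have := Polynomial.sub_dvd_eval_sub a b
      (T.map (algebraMap Fq (MvPolynomial (Fin 2) Fq)))
    simpa [Polynomial.eval_map, Polynomial.aeval_def] using this
  have key : C θ₁ * ((X 0 ^ q - X 0) * pderiv 0 F + (X 1 ^ q - X 1) * pderiv 1 F) =
      Polynomial.aeval a T - Polynomial.aeval b T := by
    rw [hd0, hd1, e1, e2]; ring
  have hF' : F = a - b := hF
  rw [hF']
  have := dvd_trans hdvd (Dvd.intro (C θ₁⁻¹) rfl)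
  rw [← key] at this
  have heq : C θ₁ * ((X 0 ^ q - X 0) * pderiv 0 F + (X 1 ^ q - X 1) * pderiv 1 F) * C θ₁⁻¹
      = (X 0 ^ q - X 0) * pderiv 0 F + (X 1 ^ q - X 1) * pderiv 1 F := by
    rw [mul_comm, ← mul_assoc, ← C_mul, inv_mul_cancel₀ hθ₁, C_1, one_mul]
  rwa [heq, hF'] at this
end

section
/- Let q' and q be prime powers with F_{q'} ⊆ F_q and n = (q−1)/(q'−1). The Fermat curve x^n + y^n + 1 = 0 over F_q is q-Frobenius nonclassical, i.e., f₀ = x^n + y^n + 1 divides (x^q − x)·n x^{n−1} + (y^q − y)·n y^{n−1} in F_q[x, y]. -/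
open MvPolynomial

/-- Let `F_{q'} ⊆ F_q` and `n = (q−1)/(q'−1)`.  The Fermat curve `x^n + y^n + 1 = 0` over
`F_q` is `q`-Frobenius nonclassical: `x^n + y^n + 1` divides
`(x^q − x)·n x^{n−1} + (y^q − y)·n y^{n−1}` in `F_q[x,y]`. -/
theorem stmt_14 (K : Type*) [Field K] [Fintype K] (F : Subfield K) [Fintype ↥F]
    (n : ℕ) (hn : n = (Fintype.card K - 1) / (Fintype.card ↥F - 1))
    (f₀ : MvPolynomial (Fin 2) K) (hf₀ : f₀ = X 0 ^ n + X 1 ^ n + 1) :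
    f₀ ∣ (X 0 ^ Fintype.card K - X 0) * ((n : MvPolynomial (Fin 2) K) * X 0 ^ (n - 1)) +
      (X 1 ^ Fintype.card K - X 1) * ((n : MvPolynomial (Fin 2) K) * X 1 ^ (n - 1)) := by
  set q := Fintype.card K with hq
  set q' := Fintype.card ↥F with hq'
  -- characteristic
  obtain ⟨p, hp⟩ := CharP.exists K
  have hpprime : p.Prime := by
    rcases CharP.char_is_prime_or_zero K p with h | h
    · exact h
    · exfalso
      haveI := Fact.mk (h ▸ hp : CharP K 0)
      have := CharP.char_ne_zero_of_finite K p
      exact absurd h (by simpa using this)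
  haveI := Fact.mk hpprime
  haveI : CharP ↥F p := (F.subtype.charP_iff Subtype.val_injective p).mpr hp
  obtain ⟨k, -, hk⟩ := FiniteField.card ↥F p
  -- q is a power of q'
  have hqpow : q = q' ^ Module.finrank ↥F K := Module.card_eq_pow_finrank
  have hq'2 : 2 ≤ q' := Fintype.one_lt_card
  have hq2 : 2 ≤ q := Fintype.one_lt_card
  have hdvd : q' - 1 ∣ q - 1 := by
    rw [hqpow]
    simpa using Nat.sub_dvd_pow_sub_pow q' 1 (Module.finrank ↥F K)
  have hnmul : n * (q' - 1) = q - 1 := by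
    rw [hn]; exact Nat.div_mul_cancel hdvd
  have hn1 : 1 ≤ n := by
    rcases Nat.eq_zero_or_pos n with h | h
    · exfalso; rw [h, zero_mul] at hnmul; omega
    · exact h
  have hexp : q + (n - 1) = n * q' := by
    have h1 : n * q' = n * (q' - 1) + n := by
      calc n * q' = n * (q' - 1 + 1) := by rw [Nat.sub_add_cancel (by omega)]
        _ = n * (q' - 1) + n := by rw [Nat.mul_add, Nat.mul_one]
    omega
  haveI : CharP (MvPolynomial (Fin 2) K) p := inferInstance
  haveI : ExpChar (MvPolynomial (Fin 2) K) p := ExpChar.prime hpprime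
  have key : f₀ ^ q' = ((X 0 : MvPolynomial (Fin 2) K) ^ n) ^ q'
      + ((X 1 : MvPolynomial (Fin 2) K) ^ n) ^ q' + 1 := by
    rw [hf₀, hq', hk, add_pow_char_pow, add_pow_char_pow, one_pow]
  have expand : ∀ i : Fin 2, ((X i : MvPolynomial (Fin 2) K) ^ q - X i) *
      ((n : MvPolynomial (Fin 2) K) * X i ^ (n - 1)) =
      (n : MvPolynomial (Fin 2) K) * (((X i : MvPolynomial (Fin 2) K) ^ n) ^ q' - X i ^ n) := by
    intro i
    have e1 : (X i : MvPolynomial (Fin 2) K) ^ q * X i ^ (n - 1) = ((X i) ^ n) ^ q' := by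
      rw [← pow_add, hexp, pow_mul]
    have e2 : (X i : MvPolynomial (Fin 2) K) * X i ^ (n - 1) = (X i) ^ n := by
      rw [← pow_succ', Nat.sub_add_cancel hn1]
    linear_combination (n : MvPolynomial (Fin 2) K) * e1 - (n : MvPolynomial (Fin 2) K) * e2
  have hmain : (X 0 ^ q - X 0) * ((n : MvPolynomial (Fin 2) K) * X 0 ^ (n - 1)) +
      (X 1 ^ q - X 1) * ((n : MvPolynomial (Fin 2) K) * X 1 ^ (n - 1)) =
      (n : MvPolynomial (Fin 2) K) * (f₀ ^ q' - f₀) := by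
    rw [expand 0, expand 1, key, hf₀]; ring
  rw [hmain]
  exact Dvd.dvd.mul_left (dvd_sub (dvd_pow_self f₀ (by omega : q' ≠ 0)) dvd_rfl) _
end

section
/- Let K be a field, and x, y elements of an extension field with f₁(x) = f₂(y) for non-constant polynomials f₁, f₂ ∈ K[x]. If [K(x, y) : K(y)] = deg f₁, then the polynomial f₁(X) − f₂(y) ∈ K(y)[X] is irreducible over K(y) and is the minimal polynomial of x over K(y); consequently f₁(x) − f₂(y) ∈ K[x, y] is irreducible in K[x, y]. -/
open Polynomial

/-- Let `K` be a field and `x, y` elements of an extension with `f₁(x) = f₂(y)` for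
non-constant `f₁, f₂ ∈ K[X]`.  If `[K(x,y) : K(y)] = deg f₁`, then `f₁(X) − f₂(y) ∈ K(y)[X]`
is irreducible over `K(y)` and is (up to a nonzero scalar) the minimal polynomial of `x` over
`K(y)`; consequently `f₁(x) − f₂(y)` is irreducible in `K[x,y]`. -/
theorem stmt_18 (K L : Type*) [Field K] [Field L] [Algebra K L]
    (f₁ f₂ : Polynomial K) (hd₁ : 0 < f₁.natDegree) (hd₂ : 0 < f₂.natDegree)
    (x y : L)
    (heq : Polynomial.aeval x f₁ = Polynomial.aeval y f₂)
    (Ky : IntermediateField K L) (hKy : Ky = IntermediateField.adjoin K {y})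
    (yK : ↥Ky) (hyK : (yK : L) = y)
    (hdegx : Module.finrank ↥Ky ↥(IntermediateField.adjoin (↥Ky) {x}) = f₁.natDegree)
    (F : Polynomial ↥Ky)
    (hF : F = f₁.map (algebraMap K ↥Ky) - Polynomial.C (Polynomial.aeval yK f₂)) :
    Irreducible F ∧ (∃ c : ↥Ky, c ≠ 0 ∧ F = Polynomial.C c * minpoly ↥Ky x) ∧
      Irreducible ((Polynomial.aeval (MvPolynomial.X 0) f₁ -
        Polynomial.aeval (MvPolynomial.X 1) f₂ : MvPolynomial (Fin 2) K)) := by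
  -- basic facts about F
  have hdegF : F.natDegree = f₁.natDegree := by
    rw [hF, natDegree_sub_C, natDegree_map]
  have hFne : F ≠ 0 := by
    intro h
    rw [h, natDegree_zero] at hdegF
    omega
  have hFx : Polynomial.aeval x F = 0 := by
    rw [hF, map_sub, aeval_map_algebraMap, aeval_C, heq, ← aeval_algebraMap_apply]
    rw [show (algebraMap (↥Ky) L yK) = (yK : L) from rfl, hyK, sub_self]
  have hxint : IsIntegral (↥Ky) x := (IsAlgebraic.isIntegral ⟨F, hFne, hFx⟩)
  have hmindeg : (minpoly (↥Ky) x).natDegree = f₁.natDegree := by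
    rw [← IntermediateField.adjoin.finrank hxint]
    exact hdegx
  obtain ⟨q, hq⟩ := minpoly.dvd (↥Ky) x hFx
  have hmne : minpoly (↥Ky) x ≠ 0 := minpoly.ne_zero hxint
  have hqne : q ≠ 0 := by
    rintro rfl
    rw [mul_zero] at hq
    exact hFne hq
  have hdq : q.natDegree = 0 := by
    have h := natDegree_mul hmne hqne
    rw [← hq, hdegF, hmindeg] at h
    omega
  have hc' := eq_C_of_natDegree_eq_zero hdq
  set c := q.coeff 0 with hcdef
  have hcne : c ≠ 0 := by
    rintro hc0
    rw [hc0, map_zero] at hc'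
    exact hqne hc'
  have hFc : F = Polynomial.C c * minpoly (↥Ky) x := by
    rw [hq, hc', mul_comm]
  have hirrmin : Irreducible (minpoly (↥Ky) x) := minpoly.irreducible hxint
  have hu : IsUnit (Polynomial.C c : Polynomial (↥Ky)) :=
    Polynomial.isUnit_C.mpr (isUnit_iff_ne_zero.mpr hcne)
  have hassoc : Associated (minpoly (↥Ky) x) F :=
    ⟨hu.unit, by rw [IsUnit.unit_spec, hFc, mul_comm]⟩
  have hirrF : Irreducible F := hassoc.irreducible hirrmin
  refine ⟨hirrF, ⟨c, hcne, hFc⟩, ?_⟩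
  -- Part 3: irreducibility in K[x,y]
  -- the equivalence MvPolynomial (Fin 2) K ≃ₐ[K] K[t][X]
  let inner : MvPolynomial (Fin 1) K ≃ₐ[K] Polynomial K :=
    (MvPolynomial.finSuccEquiv K 0).trans
      (Polynomial.mapAlgEquiv (MvPolynomial.isEmptyAlgEquiv K (Fin 0)))
  let e : MvPolynomial (Fin 2) K ≃ₐ[K] Polynomial (Polynomial K) :=
    (MvPolynomial.finSuccEquiv K 1).trans (Polynomial.mapAlgEquiv inner)
  have heX0 : e (MvPolynomial.X 0) = Polynomial.X := by
    simp only [e, AlgEquiv.trans_apply, MvPolynomial.finSuccEquiv_X_zero,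
      Polynomial.coe_mapAlgEquiv, Polynomial.map_X]
  have hinner : inner (MvPolynomial.X 0) = Polynomial.X := by
    simp only [inner, AlgEquiv.trans_apply, MvPolynomial.finSuccEquiv_X_zero,
      Polynomial.coe_mapAlgEquiv, Polynomial.map_X]
  have heX1 : e (MvPolynomial.X 1) = Polynomial.C Polynomial.X := by
    simp only [e, AlgEquiv.trans_apply, show (1 : Fin 2) = Fin.succ 0 from rfl,
      MvPolynomial.finSuccEquiv_X_succ, Polynomial.coe_mapAlgEquiv, Polynomial.map_C]
    exact congrArg Polynomial.C hinner
  set P : Polynomial (Polynomial K) := f₁.map Polynomial.C - Polynomial.C f₂ with hP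
  have haevalX : (Polynomial.aeval (Polynomial.X : Polynomial (Polynomial K)) f₁)
      = f₁.map Polynomial.C := by
    rw [aeval_def,
      show (algebraMap K (Polynomial (Polynomial K)))
        = (C : (Polynomial K) →+* _).comp C from rfl,
      ← eval₂_map (C : K →+* Polynomial K) C Polynomial.X, eval₂_C_X]
  have key : e (Polynomial.aeval (MvPolynomial.X 0) f₁ -
      Polynomial.aeval (MvPolynomial.X 1) f₂) = P := by
    rw [map_sub, ← Polynomial.aeval_algHom_apply, ← Polynomial.aeval_algHom_apply,
      heX0, heX1, haevalX,
      show (Polynomial.C Polynomial.X : Polynomial (Polynomial K))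
        = algebraMap (Polynomial K) (Polynomial (Polynomial K)) Polynomial.X from rfl,
      aeval_algebraMap_apply, aeval_X_left_apply]
    rfl
  -- properties of P
  have hPdeg : P.natDegree = f₁.natDegree := by
    rw [hP, natDegree_sub_C, natDegree_map_eq_of_injective Polynomial.C_injective]
  have hlc1 : f₁.leadingCoeff ≠ 0 := leadingCoeff_ne_zero.mpr (fun h => by
    rw [h, natDegree_zero] at hd₁; omega)
  have hPcoeff : P.coeff f₁.natDegree = Polynomial.C f₁.leadingCoeff := by
    rw [hP, coeff_sub, coeff_map, coeff_C, if_neg (by omega), sub_zero]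
    rfl
  have hPlead : P.leadingCoeff = Polynomial.C f₁.leadingCoeff := by
    rw [leadingCoeff, hPdeg, hPcoeff]
  have hPleadunit : IsUnit P.leadingCoeff := by
    rw [hPlead]
    exact Polynomial.isUnit_C.mpr (isUnit_iff_ne_zero.mpr hlc1)
  -- primitivity
  have hprim : ∀ r : Polynomial K, Polynomial.C r ∣ P → IsUnit r := by
    intro r hr
    have hdvd : r ∣ P.coeff f₁.natDegree := (Polynomial.C_dvd_iff_dvd_coeff r P).mp hr _
    rw [hPcoeff] at hdvd
    exact isUnit_of_dvd_unit hdvd (Polynomial.isUnit_C.mpr (isUnit_iff_ne_zero.mpr hlc1))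
  -- the specialization map
  let ψ : Polynomial K →+* ↥Ky := (Polynomial.aeval yK).toRingHom
  have hψC : ψ.comp (Polynomial.C) = algebraMap K ↥Ky := by
    ext k
    simp [ψ]
  have hψunit : ∀ p : Polynomial K, IsUnit p → ψ p ≠ 0 := by
    intro p hp
    obtain ⟨r, hr, rfl⟩ := Polynomial.isUnit_iff.mp hp
    have h2 : ψ (Polynomial.C r) = algebraMap K ↥Ky r := by rw [← hψC]; rfl
    rw [h2]
    intro h
    exact hr.ne_zero ((algebraMap K ↥Ky).injective (h.trans (map_zero _).symm))
  have hφP : P.map ψ = F := by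
    rw [hP, hF, Polynomial.map_sub, Polynomial.map_map, hψC, Polynomial.map_C]
    rfl
  -- irreducibility of P
  have hirrP : Irreducible P := by
    constructor
    · exact Polynomial.not_isUnit_of_natDegree_pos P (by omega)
    · intro a b hab
      have hlead : a.leadingCoeff * b.leadingCoeff = P.leadingCoeff := by
        rw [hab, leadingCoeff_mul]
      have hua : IsUnit a.leadingCoeff :=
        isUnit_of_mul_isUnit_left (hlead ▸ hPleadunit)
      have hub : IsUnit b.leadingCoeff :=
        isUnit_of_mul_isUnit_right (hlead ▸ hPleadunit)
      have hane : a ≠ 0 := fun h => by simp [h] at hua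
      have hbne : b ≠ 0 := fun h => by simp [h] at hub
      have hdega : (a.map ψ).natDegree = a.natDegree :=
        natDegree_map_of_leadingCoeff_ne_zero ψ (hψunit _ hua)
      have hdegb : (b.map ψ).natDegree = b.natDegree :=
        natDegree_map_of_leadingCoeff_ne_zero ψ (hψunit _ hub)
      have hFab : F = a.map ψ * b.map ψ := by
        rw [← Polynomial.map_mul, ← hab, hφP]
      have := hirrF.isUnit_or_isUnit hFab
      rcases this with h | h
      · left
        have ha0 : a.natDegree = 0 := by
          rw [← hdega]; exact natDegree_eq_zero_of_isUnit h
        have ha := eq_C_of_natDegree_eq_zero ha0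
        have : Polynomial.C (a.coeff 0) ∣ P := ⟨b, by rw [← ha, hab]⟩
        have hunit := hprim _ this
        rw [ha]
        exact Polynomial.isUnit_C.mpr hunit
      · right
        have hb0 : b.natDegree = 0 := by
          rw [← hdegb]; exact natDegree_eq_zero_of_isUnit h
        have hb := eq_C_of_natDegree_eq_zero hb0
        have : Polynomial.C (b.coeff 0) ∣ P := ⟨a, by rw [← hb, hab, mul_comm]⟩
        have hunit := hprim _ this
        rw [hb]
        exact Polynomial.isUnit_C.mpr hunit
  exact (MulEquiv.irreducible_iff (e : MvPolynomial (Fin 2) K ≃* Polynomial (Polynomial K))).mp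
    (key ▸ hirrP)
end
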